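/- arXiv:1209.1362 — 8 statements merged into one kernel-verified Lean document; each statement's English description precedes it below -/
import Mathlib

section
/- Let G be a finite simple graph with at least one edge, and let uv be an edge of G. Then the bondage number satisfies b(G) ≤ d(u) + d(v) − 1 − |N(u) ∩ N(v)|, where d(u), d(v) are the degrees of u and v and N(u) ∩ N(v) is the set of common neighbours of u and v. -/
/-- A finset `D` of vertices is a dominating set of `G` if every vertex not in `D`
is adjacent to some vertex in `D`. -/
def SimpleGraph.IsDominatingSet {V : Type*} (G : SimpleGraph V) (D : Finset V) : Prop :=
  ∀ v : V, v ∉ D → ∃ u ∈ D, G.Adj u v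

/-- The domination number of `G`: the minimum cardinality of a dominating set. -/
noncomputable def SimpleGraph.dominationNumber {V : Type*} [Fintype V]
    (G : SimpleGraph V) : ℕ :=
  sInf {k | ∃ D : Finset V, G.IsDominatingSet D ∧ D.card = k}

/-- The bondage number of `G`: the minimum cardinality of a set `B` of edges of `G`
whose removal increases the domination number. -/
noncomputable def SimpleGraph.bondageNumber {V : Type*} [Fintype V]
    (G : SimpleGraph V) : ℕ :=
  sInf {k | ∃ B : Finset (Sym2 V), ↑B ⊆ G.edgeSet ∧ B.card = k ∧
    G.dominationNumber < (G.deleteEdges ↑B).dominationNumber}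

theorem stmt_0 {V : Type*} [Fintype V] [DecidableEq V] (G : SimpleGraph V)
    [DecidableRel G.Adj] (u v : V) (huv : G.Adj u v) :
    G.bondageNumber ≤ G.degree u + G.degree v - 1 -
      (G.neighborFinset u ∩ G.neighborFinset v).card := by
  classical
  set S : Finset V := insert u (G.neighborFinset u ∩ G.neighborFinset v) with hS
  set B : Finset (Sym2 V) :=
    ((G.neighborFinset u).image (fun w => s(u, w))) ∪
    (((G.neighborFinset v) \ S).image (fun w => s(v, w))) with hBdef
  set H : SimpleGraph V := G.deleteEdges ↑B with hH
  -- B consists of edges of G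
  have hBsub : ↑B ⊆ G.edgeSet := by
    intro e he
    simp only [hBdef, Finset.coe_union, Set.mem_union, Finset.coe_image,
      Set.mem_image, Finset.mem_coe, SimpleGraph.mem_neighborFinset,
      Finset.mem_sdiff] at he
    rcases he with ⟨w, hw, rfl⟩ | ⟨w, ⟨hw, _⟩, rfl⟩
    · exact hw
    · exact hw
  -- cardinality bound
  have hScard : S.card = (G.neighborFinset u ∩ G.neighborFinset v).card + 1 := by
    rw [hS, Finset.card_insert_of_notMem]
    simp [SimpleGraph.mem_neighborFinset, G.irrefl]
  have hSsub : S ⊆ G.neighborFinset v := by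
    intro x hx
    rcases Finset.mem_insert.1 hx with rfl | hx
    · exact (SimpleGraph.mem_neighborFinset _ _ _).2 huv.symm
    · exact (Finset.mem_inter.1 hx).2
  have hSle : S.card ≤ G.degree v := by
    rw [SimpleGraph.degree]; exact Finset.card_le_card hSsub
  have hcard : B.card ≤ G.degree u + G.degree v - 1 -
      (G.neighborFinset u ∩ G.neighborFinset v).card := by
    have h1 : B.card ≤ (G.neighborFinset u).card +
        ((G.neighborFinset v) \ S).card :=
      le_trans (Finset.card_union_le _ _)
        (add_le_add (Finset.card_image_le) (Finset.card_image_le))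
    have h2 : ((G.neighborFinset v) \ S).card = G.degree v - S.card := by
      rw [Finset.card_sdiff_of_subset hSsub]; rfl
    rw [h2] at h1
    rw [hScard] at h1 hSle
    have hdu : (G.neighborFinset u).card = G.degree u := rfl
    rw [hdu] at h1
    omega
  -- u is isolated in H
  have hu_iso : ∀ w, ¬ H.Adj u w := by
    intro w hw
    rw [hH, SimpleGraph.deleteEdges_adj] at hw
    refine hw.2 ?_
    have : s(u, w) ∈ B := by
      refine Finset.mem_union_left _ (Finset.mem_image.2 ⟨w, ?_, rfl⟩)
      exact (SimpleGraph.mem_neighborFinset _ _ _).2 hw.1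
    exact_mod_cast this
  -- neighbors of v in H are common neighbors
  have hv_adj : ∀ w, H.Adj v w → G.Adj u w ∧ G.Adj v w := by
    intro w hw
    rw [hH, SimpleGraph.deleteEdges_adj] at hw
    refine ⟨?_, hw.1⟩
    by_contra hnu
    have hwne : w ≠ u := by
      intro hwu
      refine hw.2 ?_
      have h1 : s(u, v) ∈ B :=
        Finset.mem_union_left _ (Finset.mem_image.2
          ⟨v, (SimpleGraph.mem_neighborFinset _ _ _).2 huv, rfl⟩)
      have : s(v, w) ∈ B := by rw [hwu, Sym2.eq_swap]; exact h1
      exact_mod_cast this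
    refine hw.2 ?_
    have : s(v, w) ∈ B := by
      refine Finset.mem_union_right _ (Finset.mem_image.2 ⟨w, ?_, rfl⟩)
      rw [Finset.mem_sdiff]
      refine ⟨(SimpleGraph.mem_neighborFinset _ _ _).2 hw.1, ?_⟩
      rw [hS, Finset.mem_insert]
      rintro (rfl | hmem)
      · exact hwne rfl
      · exact hnu ((SimpleGraph.mem_neighborFinset _ _ _).1 (Finset.mem_inter.1 hmem).1)
    exact_mod_cast this
  -- H-adjacency implies G-adjacency
  have hHle : ∀ a b, H.Adj a b → G.Adj a b := by
    intro a b hab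
    rw [hH, SimpleGraph.deleteEdges_adj] at hab
    exact hab.1
  -- domination increases
  have hdom : G.dominationNumber < H.dominationNumber := by
    have hne : {k | ∃ D : Finset V, H.IsDominatingSet D ∧ D.card = k}.Nonempty :=
      ⟨(Finset.univ : Finset V).card, Finset.univ,
        fun x hx => absurd (Finset.mem_univ x) hx, rfl⟩
    obtain ⟨D, hD, hDcard⟩ := Nat.sInf_mem hne
    have huD : u ∈ D := by
      by_contra hu
      obtain ⟨d, _, hd⟩ := hD u hu
      exact hu_iso d hd.symm
    have hD' : G.IsDominatingSet (D.erase u) := by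
      intro w hw
      by_cases hwu : w = u
      · subst hwu
        by_cases hvD : v ∈ D
        · exact ⟨v, Finset.mem_erase.2 ⟨huv.ne', hvD⟩, huv.symm⟩
        · obtain ⟨d, hdD, hd⟩ := hD v hvD
          obtain ⟨h1, _⟩ := hv_adj d hd.symm
          exact ⟨d, Finset.mem_erase.2 ⟨h1.ne', hdD⟩, h1.symm⟩
      · have hwD : w ∉ D := fun h => hw (Finset.mem_erase.2 ⟨hwu, h⟩)
        obtain ⟨d, hdD, hd⟩ := hD w hwD
        have hdu : d ≠ u := by rintro rfl; exact hu_iso w hd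
        exact ⟨d, Finset.mem_erase.2 ⟨hdu, hdD⟩, hHle _ _ hd⟩
    have hle : G.dominationNumber ≤ (D.erase u).card :=
      Nat.sInf_le ⟨D.erase u, hD', rfl⟩
    have hpos : 0 < D.card := Finset.card_pos.2 ⟨u, huD⟩
    have herase : (D.erase u).card = D.card - 1 := Finset.card_erase_of_mem huD
    have hHeq : H.dominationNumber = D.card := hDcard.symm
    rw [hHeq]
    omega
  calc G.bondageNumber ≤ B.card := Nat.sInf_le ⟨B, hBsub, rfl, hdom⟩
    _ ≤ _ := hcard
end

section
/- Let G be a finite simple graph with at least one edge and with minimum vertex degree δ(G) ≥ 1. Then the bondage number satisfies b(G) ≤ Δ(G) + δ(G) − 1, where Δ(G) is the maximum vertex degree of G. -/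
theorem stmt_1 {V : Type*} [Fintype V] (G : SimpleGraph V) [DecidableRel G.Adj]
    (hne : G.edgeSet.Nonempty) (hδ : 1 ≤ G.minDegree) :
    G.bondageNumber ≤ G.maxDegree + G.minDegree - 1 := by
  classical
  obtain ⟨e, he⟩ := hne
  have hV : Nonempty V := by
    induction e using Sym2.ind with
    | _ a b => exact ⟨a⟩
  obtain ⟨v, hv⟩ := G.exists_minimal_degree_vertex
  have hdv : 0 < G.degree v := by omega
  obtain ⟨u, huv⟩ := (G.degree_pos_iff_exists_adj v).1 hdv
  have hdu : 0 < G.degree u := (G.degree_pos_iff_exists_adj u).2 ⟨v, huv.symm⟩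
  have hune : u ≠ v := (G.ne_of_adj huv.symm)
  set B : Finset (Sym2 V) :=
    G.incidenceFinset v ∪ (G.incidenceFinset u \ {s(u, v)}) with hB
  have hBsub : ↑B ⊆ G.edgeSet := by
    intro x hx
    simp only [hB, Finset.coe_union, Set.mem_union, Finset.coe_sdiff, Set.mem_diff,
      Finset.mem_coe, SimpleGraph.mem_incidenceFinset] at hx
    rcases hx with h | ⟨h, _⟩
    · exact G.incidenceSet_subset v h
    · exact G.incidenceSet_subset u h
  have hcard : B.card ≤ G.maxDegree + G.minDegree - 1 := by
    have h1 : B.card ≤ (G.incidenceFinset v).card + (G.incidenceFinset u \ {s(u,v)}).card :=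
      Finset.card_union_le _ _
    have h2 : (G.incidenceFinset v).card = G.degree v := G.card_incidenceFinset_eq_degree v
    have hmem : s(u,v) ∈ G.incidenceFinset u := by
      rw [SimpleGraph.mem_incidenceFinset, SimpleGraph.mem_incidenceSet]
      exact huv.symm
    have h3 : (G.incidenceFinset u \ {s(u,v)}).card = G.degree u - 1 := by
      rw [Finset.sdiff_singleton_eq_erase, Finset.card_erase_of_mem hmem,
        G.card_incidenceFinset_eq_degree u]
    have h4 : G.degree u ≤ G.maxDegree := G.degree_le_maxDegree u
    omega
  -- isolation facts
  have hIsoV : ∀ w, ¬ (G.deleteEdges ↑B).Adj v w := by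
    intro w hw
    rw [SimpleGraph.deleteEdges_adj] at hw
    refine hw.2 ?_
    simp only [hB, Finset.coe_union, Set.mem_union, Finset.mem_coe,
      SimpleGraph.mem_incidenceFinset, SimpleGraph.mem_incidenceSet]
    exact Or.inl hw.1
  have hIsoU : ∀ w, ¬ (G.deleteEdges ↑B).Adj u w := by
    intro w hw
    rw [SimpleGraph.deleteEdges_adj] at hw
    refine hw.2 ?_
    by_cases hwv : w = v
    · subst hwv
      simp only [hB, Finset.coe_union, Set.mem_union, Finset.mem_coe,
        SimpleGraph.mem_incidenceFinset]
      left
      rw [Sym2.eq_swap, SimpleGraph.mem_incidenceSet]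
      exact hw.1.symm
    · have hwu : w ≠ u := fun h => (hw.1.ne (h ▸ rfl)).elim
      simp only [hB, Finset.coe_union, Set.mem_union, Finset.mem_coe, Finset.mem_sdiff,
        SimpleGraph.mem_incidenceFinset, Finset.mem_singleton]
      right
      constructor
      · rw [SimpleGraph.mem_incidenceSet]; exact hw.1
      · intro h
        rw [Sym2.eq_iff] at h
        rcases h with ⟨_, h⟩ | ⟨h, _⟩
        · exact hwv h
        · exact hune h
  -- domination facts
  have domNE : ∀ (H : SimpleGraph V),
      {k | ∃ D : Finset V, H.IsDominatingSet D ∧ D.card = k}.Nonempty := by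
    intro H
    exact ⟨Finset.univ.card, Finset.univ, fun w hw => (hw (Finset.mem_univ w)).elim, rfl⟩
  have domLe : ∀ (H : SimpleGraph V) (D : Finset V), H.IsDominatingSet D →
      H.dominationNumber ≤ D.card := by
    intro H D hD
    exact Nat.sInf_le ⟨D, hD, rfl⟩
  have hlt : G.dominationNumber < (G.deleteEdges ↑B).dominationNumber := by
    obtain ⟨D, hD, hDcard⟩ := Nat.sInf_mem (domNE (G.deleteEdges ↑B))
    have hDcard' : (G.deleteEdges (↑B : Set (Sym2 V))).dominationNumber = D.card := hDcard.symm
    rw [hDcard']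
    have huD : u ∈ D := by
      by_contra h
      obtain ⟨x, _, hx⟩ := hD u h
      exact hIsoU x hx.symm
    have hvD : v ∈ D := by
      by_contra h
      obtain ⟨x, _, hx⟩ := hD v h
      exact hIsoV x hx.symm
    have hdom : G.IsDominatingSet (D.erase u) := by
      intro w hw
      by_cases hwu : w = u
      · subst hwu
        exact ⟨v, Finset.mem_erase.2 ⟨hune.symm, hvD⟩, huv⟩
      · have hwD : w ∉ D := fun h => hw (Finset.mem_erase.2 ⟨hwu, h⟩)
        obtain ⟨x, hxD, hx⟩ := hD w hwD
        have hxu : x ≠ u := by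
          intro h; subst h; exact hIsoU w hx
        exact ⟨x, Finset.mem_erase.2 ⟨hxu, hxD⟩, (SimpleGraph.deleteEdges_adj.1 hx).1⟩
    have := domLe G (D.erase u) hdom
    rw [Finset.card_erase_of_mem huD] at this
    have hD1 : 1 ≤ D.card := Finset.card_pos.2 ⟨u, huD⟩
    omega
  exact le_trans (Nat.sInf_le ⟨B, hBsub, rfl, hlt⟩) hcard
end

section
/- Let G be a finite connected simple graph with n ≥ 2 vertices and m edges. Then 4m ≥ n·(b(G) + 1), where b(G) is the bondage number of G. -/
open Finset

namespace Bondage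

variable {V : Type*} [Fintype V] [DecidableEq V]

lemma domNum_le (G : SimpleGraph V) {D : Finset V} (hD : G.IsDominatingSet D) :
    G.dominationNumber ≤ D.card :=
  Nat.sInf_le ⟨D, hD, rfl⟩

lemma exists_min_dom (G : SimpleGraph V) :
    ∃ D : Finset V, G.IsDominatingSet D ∧ D.card = G.dominationNumber :=
  Nat.sInf_mem (⟨_, Finset.univ, fun v hv => absurd (Finset.mem_univ v) hv, rfl⟩ :
    Set.Nonempty {k | ∃ D : Finset V, G.IsDominatingSet D ∧ D.card = k})

lemma isolated_mem_dom {G' : SimpleGraph V} {D : Finset V} (hD : G'.IsDominatingSet D)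
    {u : V} (hu : ∀ y, ¬ G'.Adj y u) : u ∈ D := by
  by_contra h
  obtain ⟨y, _, hy⟩ := hD u h
  exact hu y hy

/-- Bondage bound for adjacent pairs: remove all edges at `u` and `v`. -/
lemma bondage_adj (G : SimpleGraph V) [DecidableRel G.Adj] {u v : V} (h : G.Adj u v) :
    G.bondageNumber + 1 ≤ G.degree u + G.degree v := by
  classical
  set B : Finset (Sym2 V) := G.incidenceFinset u ∪ G.incidenceFinset v with hB
  set G' := G.deleteEdges ↑B with hG'
  -- u and v are isolated in G'
  have hiso : ∀ x ∈ ({u, v} : Finset V), ∀ y, ¬ G'.Adj y x := by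
    intro x hx y hadj
    rw [hG', SimpleGraph.deleteEdges_adj] at hadj
    apply hadj.2
    rw [Finset.mem_coe, hB, Finset.mem_union]
    simp only [Finset.mem_insert, Finset.mem_singleton] at hx
    rcases hx with rfl | rfl
    · exact Or.inl (by rw [SimpleGraph.mem_incidenceFinset]
                       exact ⟨(SimpleGraph.mem_edgeSet G).2 hadj.1, Sym2.mem_mk_right y x⟩)
    · exact Or.inr (by rw [SimpleGraph.mem_incidenceFinset]
                       exact ⟨(SimpleGraph.mem_edgeSet G).2 hadj.1, Sym2.mem_mk_right y x⟩)
  have hne : u ≠ v := h.ne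
  -- domination number increases
  have hincr : G.dominationNumber < G'.dominationNumber := by
    obtain ⟨D, hD, hDcard⟩ := exists_min_dom G'
    have hu : u ∈ D := isolated_mem_dom hD (hiso u (by simp))
    have hv : v ∈ D := isolated_mem_dom hD (hiso v (by simp))
    have hdom : G.IsDominatingSet (D.erase u) := by
      intro x hx
      by_cases hxu : x = u
      · exact ⟨v, Finset.mem_erase.2 ⟨hne.symm, hv⟩, by rw [hxu]; exact h.symm⟩
      · have hxD : x ∉ D := fun hxD => hx (Finset.mem_erase.2 ⟨hxu, hxD⟩)
        obtain ⟨y, hyD, hy⟩ := hD x hxD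
        have hyu : y ≠ u := by
          intro h'
          rw [h'] at hy
          exact hiso u (by simp) x hy.symm
        exact ⟨y, Finset.mem_erase.2 ⟨hyu, hyD⟩, (SimpleGraph.deleteEdges_adj.1 hy).1⟩
    have h1 : G.dominationNumber ≤ (D.erase u).card := domNum_le G hdom
    have h2 : (D.erase u).card + 1 = D.card := Finset.card_erase_add_one hu
    omega
  have hsub : ↑B ⊆ G.edgeSet := by
    intro e he
    rw [Finset.mem_coe, hB, Finset.mem_union] at he
    rcases he with he | he <;>
      exact ((G.mem_incidenceFinset _ _).1 he).1
  have hble : G.bondageNumber ≤ B.card := Nat.sInf_le ⟨B, hsub, rfl, hincr⟩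
  have hcard : B.card + 1 ≤ G.degree u + G.degree v := by
    have h1 : (G.incidenceFinset u ∩ G.incidenceFinset v).Nonempty := by
      refine ⟨s(u, v), Finset.mem_inter.2 ⟨?_, ?_⟩⟩
      · rw [SimpleGraph.mem_incidenceFinset]
        exact ⟨(SimpleGraph.mem_edgeSet G).2 h, Sym2.mem_mk_left u v⟩
      · rw [SimpleGraph.mem_incidenceFinset]
        exact ⟨(SimpleGraph.mem_edgeSet G).2 h, Sym2.mem_mk_right u v⟩
    have h2 := Finset.card_union_add_card_inter (G.incidenceFinset u) (G.incidenceFinset v)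
    have h3 : 1 ≤ (G.incidenceFinset u ∩ G.incidenceFinset v).card := Finset.card_pos.2 h1
    rw [G.card_incidenceFinset_eq_degree, G.card_incidenceFinset_eq_degree, ← hB] at h2
    omega
  omega

/-- Bondage bound for pairs with a common neighbour. -/
lemma bondage_dist2 (G : SimpleGraph V) [DecidableRel G.Adj] {u v w : V} (huv : u ≠ v)
    (h1 : G.Adj u w) (h2 : G.Adj w v) :
    G.bondageNumber + 1 ≤ G.degree u + G.degree v := by
  classical
  set B : Finset (Sym2 V) := G.incidenceFinset u ∪ ((G.incidenceFinset v).erase s(v, w))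
    with hB
  set G' := G.deleteEdges ↑B with hG'
  have hwv : w ≠ v := h2.ne
  have hwu : w ≠ u := h1.ne'
  -- u is isolated in G'
  have hisou : ∀ y, ¬ G'.Adj y u := by
    intro y hadj
    rw [hG', SimpleGraph.deleteEdges_adj] at hadj
    apply hadj.2
    rw [Finset.mem_coe, hB, Finset.mem_union]
    exact Or.inl (by rw [SimpleGraph.mem_incidenceFinset]
                     exact ⟨(SimpleGraph.mem_edgeSet G).2 hadj.1, Sym2.mem_mk_right y u⟩)
  -- in G', the only possible neighbour of v is w
  have hnbv : ∀ y, G'.Adj y v → y = w := by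
    intro y hadj
    by_contra hyw
    rw [hG', SimpleGraph.deleteEdges_adj] at hadj
    apply hadj.2
    rw [Finset.mem_coe, hB, Finset.mem_union]
    refine Or.inr (Finset.mem_erase.2 ⟨?_, ?_⟩)
    · intro hE
      rw [Sym2.eq_iff] at hE
      rcases hE with ⟨h5, h6⟩ | ⟨h5, h6⟩
      · exact hadj.1.ne h5
      · exact hyw h5
    · rw [SimpleGraph.mem_incidenceFinset]
      exact ⟨(SimpleGraph.mem_edgeSet G).2 hadj.1, Sym2.mem_mk_right y v⟩
  have hincr : G.dominationNumber < G'.dominationNumber := by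
    obtain ⟨D, hD, hDcard⟩ := exists_min_dom G'
    have hu : u ∈ D := isolated_mem_dom hD hisou
    by_cases hw : w ∈ D
    · -- remove u, dominated by w
      have hdom : G.IsDominatingSet (D.erase u) := by
        intro x hx
        by_cases hxu : x = u
        · exact ⟨w, Finset.mem_erase.2 ⟨hwu, hw⟩, by rw [hxu]; exact h1.symm⟩
        · have hxD : x ∉ D := fun hxD => hx (Finset.mem_erase.2 ⟨hxu, hxD⟩)
          obtain ⟨y, hyD, hy⟩ := hD x hxD
          have hyu : y ≠ u := by intro h'; rw [h'] at hy; exact hisou x hy.symm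
          exact ⟨y, Finset.mem_erase.2 ⟨hyu, hyD⟩, (SimpleGraph.deleteEdges_adj.1 hy).1⟩
      have := domNum_le G hdom
      have := Finset.card_erase_add_one hu
      omega
    · -- then v ∈ D; replace {u, v} by {w}
      have hv : v ∈ D := by
        by_contra hvD
        obtain ⟨y, hyD, hy⟩ := hD v hvD
        exact hw (hnbv y hy ▸ hyD)
      set D' := insert w ((D.erase u).erase v) with hD'
      have hdom : G.IsDominatingSet D' := by
        intro x hx
        have hwD' : w ∈ D' := Finset.mem_insert_self w _
        by_cases hxu : x = u
        · exact ⟨w, hwD', by rw [hxu]; exact h1.symm⟩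
        by_cases hxv : x = v
        · exact ⟨w, hwD', by rw [hxv]; exact h2⟩
        have hxD : x ∉ D := by
          intro hxD
          exact hx (Finset.mem_insert.2 (Or.inr
            (Finset.mem_erase.2 ⟨hxv, Finset.mem_erase.2 ⟨hxu, hxD⟩⟩)))
        obtain ⟨y, hyD, hy⟩ := hD x hxD
        have hyu : y ≠ u := by intro h'; rw [h'] at hy; exact hisou x hy.symm
        have hyv : y ≠ v := by
          intro h'
          rw [h'] at hy
          exact hx (by rw [hnbv x hy.symm, hD']; exact Finset.mem_insert_self w _)
        exact ⟨y, Finset.mem_insert.2 (Or.inr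
          (Finset.mem_erase.2 ⟨hyv, Finset.mem_erase.2 ⟨hyu, hyD⟩⟩)),
          (SimpleGraph.deleteEdges_adj.1 hy).1⟩
      have hc1 : ((D.erase u).erase v).card + 1 = (D.erase u).card :=
        Finset.card_erase_add_one (Finset.mem_erase.2 ⟨huv.symm, hv⟩)
      have hc2 : (D.erase u).card + 1 = D.card := Finset.card_erase_add_one hu
      have hc3 : D'.card ≤ ((D.erase u).erase v).card + 1 := Finset.card_insert_le _ _
      have := domNum_le G hdom
      omega
  have hsub : ↑B ⊆ G.edgeSet := by
    intro e he
    rw [Finset.mem_coe, hB, Finset.mem_union] at he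
    rcases he with he | he
    · exact ((G.mem_incidenceFinset _ _).1 he).1
    · exact ((G.mem_incidenceFinset _ _).1 (Finset.mem_of_mem_erase he)).1
  have hble : G.bondageNumber ≤ B.card := Nat.sInf_le ⟨B, hsub, rfl, hincr⟩
  have hcard : B.card + 1 ≤ G.degree u + G.degree v := by
    have h3 : B.card ≤ (G.incidenceFinset u).card + ((G.incidenceFinset v).erase s(v, w)).card :=
      Finset.card_union_le _ _
    have h4 : ((G.incidenceFinset v).erase s(v, w)).card + 1 = (G.incidenceFinset v).card :=
      Finset.card_erase_add_one (by
        rw [SimpleGraph.mem_incidenceFinset]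
        exact ⟨(SimpleGraph.mem_edgeSet G).2 h2.symm, Sym2.mem_mk_left v w⟩)
    rw [G.card_incidenceFinset_eq_degree] at h3
    rw [G.card_incidenceFinset_eq_degree] at h4
    omega
  omega

lemma deg_pos (G : SimpleGraph V) [DecidableRel G.Adj] (hconn : G.Connected)
    (hn : 2 ≤ Fintype.card V) (v : V) : 0 < G.degree v := by
  rw [SimpleGraph.degree_pos_iff_exists_adj]
  obtain ⟨w, hw⟩ := Fintype.exists_ne_of_one_lt_card hn v
  obtain ⟨p⟩ := hconn.preconnected v w
  cases p with
  | nil => exact absurd rfl hw.symm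
  | cons h p => exact ⟨_, h⟩

/-- Counting lemma: there is a pair at distance at most 2 with small degree sum. -/
lemma exists_close_pair (G : SimpleGraph V) [DecidableRel G.Adj] (hconn : G.Connected)
    (hn : 2 ≤ Fintype.card V) :
    ∃ u v : V, u ≠ v ∧ (G.Adj u v ∨ ∃ w, G.Adj u w ∧ G.Adj w v) ∧
      Fintype.card V * (G.degree u + G.degree v) ≤ 4 * G.edgeFinset.card := by
  classical
  by_contra hcon
  push_neg at hcon
  set n := Fintype.card V with hn'
  set m := G.edgeFinset.card with hm'
  set f : V → ℤ := fun x => (n : ℤ) * G.degree x - 2 * m with hf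
  have hpair : ∀ u v : V, u ≠ v → (G.Adj u v ∨ ∃ w, G.Adj u w ∧ G.Adj w v) →
      1 ≤ f u + f v := by
    intro u v h1 h2
    have := hcon u v h1 h2
    simp only [hf]
    have : (4 * m : ℤ) < n * (G.degree u + G.degree v) := by exact_mod_cast this
    push_cast
    linarith
  set L : Finset V := Finset.univ.filter (fun x => f x ≤ 0) with hL
  set ball : V → Finset V := fun u => insert u (G.neighborFinset u) with hball
  have hmemL : ∀ x ∈ L, f x ≤ 0 := fun x hx => (Finset.mem_filter.1 hx).2
  have hdisj : (L : Set V).Pairwise fun u v => Disjoint (ball u) (ball v) := by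
    intro u hu v hv huv
    rw [Finset.disjoint_left]
    intro x hxu hxv
    simp only [hball, Finset.mem_insert, SimpleGraph.mem_neighborFinset] at hxu hxv
    have hfu := hmemL u hu
    have hfv := hmemL v hv
    have hclose : G.Adj u v ∨ ∃ w, G.Adj u w ∧ G.Adj w v := by
      rcases hxu with rfl | hxu
      · rcases hxv with rfl | hxv
        · exact absurd rfl huv
        · exact Or.inl (hxv).symm
      · rcases hxv with rfl | hxv
        · exact Or.inl hxu
        · exact Or.inr ⟨x, hxu, hxv.symm⟩
    have := hpair u v huv hclose
    linarith
  have hdeg : ∀ x : V, 0 < G.degree x := deg_pos G hconn hn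
  -- total sum of f is zero
  have hsumf : ∑ x, f x = 0 := by
    simp only [hf]
    rw [Finset.sum_sub_distrib, ← Finset.mul_sum, Finset.sum_const, Finset.card_univ]
    have : (∑ x, (G.degree x : ℤ)) = 2 * m := by
      exact_mod_cast congrArg (Nat.cast : ℕ → ℤ) G.sum_degrees_eq_twice_card_edges
    rw [this]
    push_cast
    ring
  set S := L.biUnion ball with hS
  have hcardball : ∀ u : V, (ball u).card = 1 + G.degree u := by
    intro u
    rw [hball]
    simp only []
    rw [Finset.card_insert_of_notMem (by simp), SimpleGraph.card_neighborFinset_eq_degree]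
    omega
  have hcardS : S.card = ∑ u ∈ L, (1 + G.degree u) := by
    rw [hS, Finset.card_biUnion hdisj]
    exact Finset.sum_congr rfl fun u _ => hcardball u
  -- lower bound on the ball sums
  have hballsum : ∀ u ∈ L, f u + (G.degree u : ℤ) * (1 - f u) ≤ ∑ x ∈ ball u, f x := by
    intro u hu
    rw [hball]
    simp only []
    rw [Finset.sum_insert (by simp)]
    have : (G.degree u : ℤ) * (1 - f u) ≤ ∑ x ∈ G.neighborFinset u, f x := by
      have h1 : ∀ x ∈ G.neighborFinset u, (1 : ℤ) - f u ≤ f x := by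
        intro x hx
        rw [SimpleGraph.mem_neighborFinset] at hx
        have := hpair u x hx.ne (Or.inl hx)
        linarith
      calc (G.degree u : ℤ) * (1 - f u)
          = (G.neighborFinset u).card * (1 - f u) := by
            rw [SimpleGraph.card_neighborFinset_eq_degree]
        _ ≤ ∑ x ∈ G.neighborFinset u, f x := by
            rw [Finset.card_eq_sum_ones]
            push_cast
            rw [Finset.sum_mul]
            apply Finset.sum_le_sum
            intro x hx
            simpa using h1 x hx
    linarith
  -- lower bound on the complement sum
  have hcompl : (Sᶜ.card : ℤ) ≤ ∑ x ∈ Sᶜ, f x := by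
    have h1 : ∀ x ∈ Sᶜ, (1 : ℤ) ≤ f x := by
      intro x hx
      rw [Finset.mem_compl] at hx
      have hxL : x ∉ L := by
        intro hxL
        exact hx (Finset.mem_biUnion.2 ⟨x, hxL, by simp [hball]⟩)
      rw [hL] at hxL
      simp only [Finset.mem_filter, Finset.mem_univ, true_and, not_le] at hxL
      linarith
    calc (Sᶜ.card : ℤ) = ∑ _x ∈ Sᶜ, (1 : ℤ) := by simp
      _ ≤ ∑ x ∈ Sᶜ, f x := Finset.sum_le_sum h1
  have hsplit : ∑ x ∈ S, f x + ∑ x ∈ Sᶜ, f x = ∑ x, f x := Finset.sum_add_sum_compl S f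
  have hSsum : ∑ u ∈ L, (f u + (G.degree u : ℤ) * (1 - f u)) ≤ ∑ x ∈ S, f x := by
    rw [hS, Finset.sum_biUnion hdisj]
    exact Finset.sum_le_sum hballsum
  have hcardScompl : (Sᶜ.card : ℤ) = n - S.card := by
    rw [Finset.card_compl]
    have := Finset.card_le_univ S
    push_cast
    omega
  -- per-element bound on L
  have hLbound : ∀ u ∈ L, (-1 : ℤ) ≤ f u + (G.degree u : ℤ) * (1 - f u) - (1 + G.degree u) := by
    intro u hu
    have h1 : f u ≤ 0 := hmemL u hu
    have h2 : (1 : ℤ) ≤ G.degree u := by exact_mod_cast hdeg u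
    nlinarith
  have hLclaim : (n : ℤ) ≤ L.card := by
    have key : -(L.card : ℤ) ≤ ∑ u ∈ L, (f u + (G.degree u : ℤ) * (1 - f u) - (1 + G.degree u)) := by
      calc -(L.card : ℤ) = ∑ _u ∈ L, (-1 : ℤ) := by simp
        _ ≤ _ := Finset.sum_le_sum hLbound
    have hexp : ∑ u ∈ L, (f u + (G.degree u : ℤ) * (1 - f u) - (1 + G.degree u))
        = ∑ u ∈ L, (f u + (G.degree u : ℤ) * (1 - f u)) - (S.card : ℤ) := by
      rw [Finset.sum_sub_distrib, hcardS]
      push_cast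
      ring
    have hbig : ∑ u ∈ L, (f u + (G.degree u : ℤ) * (1 - f u)) + ((n : ℤ) - S.card) ≤ 0 := by
      rw [← hsumf, ← hsplit]
      have := hcompl
      rw [hcardScompl] at this
      linarith
    rw [hexp] at key
    linarith
  have hLuniv : L = Finset.univ := by
    apply Finset.eq_univ_of_card
    have h1 : L.card ≤ Fintype.card V := Finset.card_le_univ L
    have h2 : (Fintype.card V : ℤ) ≤ L.card := hLclaim
    exact_mod_cast le_antisymm h1 (by exact_mod_cast h2)
  -- contradiction: an edge has both endpoints in L
  have hpos : 0 < Fintype.card V := by omega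
  obtain ⟨v⟩ := Fintype.card_pos_iff.1 hpos
  obtain ⟨x, hx⟩ := (G.degree_pos_iff_exists_adj v).1 (hdeg v)
  have hfv : f v ≤ 0 := hmemL v (hLuniv ▸ Finset.mem_univ v)
  have hfx : f x ≤ 0 := hmemL x (hLuniv ▸ Finset.mem_univ x)
  have := hpair v x hx.ne (Or.inl hx)
  linarith

/-- Combined bondage bound. -/
lemma bondage_bound (G : SimpleGraph V) [DecidableRel G.Adj] {u v : V} (huv : u ≠ v)
    (h : G.Adj u v ∨ ∃ w, G.Adj u w ∧ G.Adj w v) :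
    G.bondageNumber + 1 ≤ G.degree u + G.degree v := by
  rcases h with h | ⟨w, h1, h2⟩
  · exact bondage_adj G h
  · exact bondage_dist2 G huv h1 h2

end Bondage

theorem stmt_2 {V : Type*} [Fintype V] [DecidableEq V] (G : SimpleGraph V)
    [DecidableRel G.Adj] (hconn : G.Connected) (hn : 2 ≤ Fintype.card V) :
    Fintype.card V * (G.bondageNumber + 1) ≤ 4 * G.edgeFinset.card := by
  obtain ⟨u, v, huv, hclose, hsum⟩ := Bondage.exists_close_pair G hconn hn
  calc Fintype.card V * (G.bondageNumber + 1)
      ≤ Fintype.card V * (G.degree u + G.degree v) :=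
        Nat.mul_le_mul_left _ (Bondage.bondage_bound G huv hclose)
    _ ≤ 4 * G.edgeFinset.card := hsum
end

section
/- Let G be a finite connected simple graph with n ≥ 2 vertices and m edges, and let χ be an integer. If m ≤ 3(n − χ), then the bondage number satisfies b(G) ≤ 11 − 12χ/n, i.e. n·(b(G) + 1) ≤ 12(n − χ). -/
set_option linter.unusedSectionVars false
set_option maxHeartbeats 1000000

namespace SimpleGraph

variable {V : Type*} [Fintype V] [DecidableEq V] (G : SimpleGraph V)

lemma dominationNumber_le {D : Finset V} (hD : G.IsDominatingSet D) :
    G.dominationNumber ≤ D.card :=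
  Nat.sInf_le ⟨D, hD, rfl⟩

lemma exists_min_dominating (G : SimpleGraph V) :
    ∃ D : Finset V, G.IsDominatingSet D ∧ D.card = G.dominationNumber := by
  have hne : {k | ∃ D : Finset V, G.IsDominatingSet D ∧ D.card = k}.Nonempty :=
    ⟨Finset.univ.card, Finset.univ, fun v hv => absurd (Finset.mem_univ v) hv, rfl⟩
  exact Nat.sInf_mem hne

variable [DecidableRel G.Adj]

/-- Key bondage bound: if `v` is adjacent to `w`, and `w` is `u` itself or a neighbor of `u`
(`u ≠ v`), then removing all edges at `u` together with all edges at `v` except `vw`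
increases the domination number. -/
lemma bondageNumber_le_of_close {u v w : V} (huv : u ≠ v) (hvw : G.Adj v w)
    (hw : w = u ∨ G.Adj u w) :
    G.bondageNumber ≤ G.degree u + G.degree v - 1 := by
  classical
  set B : Finset (Sym2 V) :=
    G.incidenceFinset u ∪ (G.incidenceFinset v \ {s(v, w)}) with hB
  have hBsub : ↑B ⊆ G.edgeSet := by
    intro e he
    simp only [hB, Finset.coe_union, Set.mem_union, Finset.coe_sdiff, Set.mem_diff,
      Finset.mem_coe, mem_incidenceFinset] at he
    rcases he with h | ⟨h, _⟩ <;> exact h.1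
  have hvwB : s(v, w) ∈ G.incidenceFinset v := by
    rw [mem_incidenceFinset]
    exact ⟨hvw, Sym2.mem_mk_left v w⟩
  have hdv : 1 ≤ G.degree v := by
    rw [← card_incidenceFinset_eq_degree]
    exact Finset.card_pos.2 ⟨_, hvwB⟩
  have hBcard : B.card ≤ G.degree u + G.degree v - 1 := by
    have h1 : (G.incidenceFinset v \ {s(v, w)}).card = G.degree v - 1 := by
      rw [Finset.card_sdiff_of_subset (Finset.singleton_subset_iff.2 hvwB),
        card_incidenceFinset_eq_degree, Finset.card_singleton]
    have h2 := Finset.card_union_le (G.incidenceFinset u) (G.incidenceFinset v \ {s(v, w)})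
    rw [h1, card_incidenceFinset_eq_degree] at h2
    rw [hB]
    omega
  -- structure of the deleted graph
  have hu_isolated : ∀ x : V, ¬ (G.deleteEdges ↑B).Adj u x := by
    intro x hx
    rw [deleteEdges_adj] at hx
    refine hx.2 (Finset.mem_coe.2 ?_)
    rw [hB, Finset.mem_union, mem_incidenceFinset]
    exact Or.inl ⟨hx.1, Sym2.mem_mk_left u x⟩
  have hv_adj : ∀ x : V, (G.deleteEdges ↑B).Adj v x → x = w ∧ w ≠ u := by
    intro x hx
    rw [deleteEdges_adj] at hx
    have hnB : s(v, x) ∉ B := fun h => hx.2 (Finset.mem_coe.2 h)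
    rw [hB, Finset.mem_union, not_or, Finset.mem_sdiff, not_and, not_not] at hnB
    have hmem : s(v, x) ∈ G.incidenceFinset v := by
      rw [mem_incidenceFinset]; exact ⟨hx.1, Sym2.mem_mk_left _ _⟩
    have heq : s(v, x) = s(v, w) := Finset.mem_singleton.1 (hnB.2 hmem)
    rw [Sym2.eq_iff] at heq
    have hxw : x = w := by
      rcases heq with ⟨_, h⟩ | ⟨h1, h2⟩
      · exact h
      · exact absurd h1 (G.ne_of_adj hvw)
    refine ⟨hxw, fun hwu => hnB.1 ?_⟩
    rw [mem_incidenceFinset]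
    refine ⟨hx.1, ?_⟩
    rw [hxw, hwu]
    exact Sym2.mem_mk_right _ _
  -- the domination number increases
  have hdom : G.dominationNumber < (G.deleteEdges ↑B).dominationNumber := by
    obtain ⟨D', hD', hcard⟩ := (G.deleteEdges ↑B).exists_min_dominating
    have hle : ∀ a b, (G.deleteEdges ↑B).Adj a b → G.Adj a b := fun a b h =>
      (deleteEdges_adj ..).1 h |>.1
    have huD : u ∈ D' := by
      by_contra hu
      obtain ⟨x, hx, hadj⟩ := hD' u hu
      exact hu_isolated x hadj.symm
    rcases Classical.em (w ∈ D' ∧ w ≠ u) with ⟨hwD, hwu⟩ | hcase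
    · -- D' \ {u} dominates G
      have hdomG : G.IsDominatingSet (D'.erase u) := by
        intro x hx
        rcases Classical.em (x = u) with hxu | hxu
        · refine ⟨w, Finset.mem_erase.2 ⟨hwu, hwD⟩, ?_⟩
          rw [hxu]
          exact (hw.resolve_left hwu).symm
        · have hxD : x ∉ D' := fun h => hx (Finset.mem_erase.2 ⟨hxu, h⟩)
          obtain ⟨y, hy, hadj⟩ := hD' x hxD
          have hyu : y ≠ u := fun h => hu_isolated x (h ▸ hadj)
          exact ⟨y, Finset.mem_erase.2 ⟨hyu, hy⟩, hle _ _ hadj⟩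
      calc G.dominationNumber ≤ (D'.erase u).card := G.dominationNumber_le hdomG
        _ < D'.card := Finset.card_erase_lt_of_mem huD
        _ = _ := hcard
    · -- v must be in D'
      have hvD : v ∈ D' := by
        by_contra hv
        obtain ⟨x, hx, hadj⟩ := hD' v hv
        obtain ⟨hxw, hwu⟩ := hv_adj x hadj.symm
        exact hcase ⟨hxw ▸ hx, hwu⟩
      have hDcard : 2 ≤ D'.card := Finset.one_lt_card.2 ⟨u, huD, v, hvD, huv⟩
      set D : Finset V := insert w ((D'.erase u).erase v) with hD
      have hdomG : G.IsDominatingSet D := by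
        intro x hx
        have hxw : x ≠ w := fun h => hx (h ▸ Finset.mem_insert_self w _)
        have hwD : w ∈ D := Finset.mem_insert_self w _
        rcases Classical.em (x = v) with rfl | hxv
        · exact ⟨w, hwD, hvw.symm⟩
        rcases Classical.em (x = u) with hxu | hxu
        · refine ⟨w, hwD, ?_⟩
          rw [hxu]
          exact (hw.resolve_left (fun h => hxw (hxu.trans h.symm))).symm
        have hxD : x ∉ D' := by
          intro h
          exact hx (Finset.mem_insert.2 (Or.inr (Finset.mem_erase.2 ⟨hxv,
            Finset.mem_erase.2 ⟨hxu, h⟩⟩)))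
        obtain ⟨y, hy, hadj⟩ := hD' x hxD
        have hyu : y ≠ u := fun h => hu_isolated x (h ▸ hadj)
        have hyv : y ≠ v := by
          intro h
          obtain ⟨hxw', _⟩ := hv_adj x (h ▸ hadj)
          exact hxw hxw'
        refine ⟨y, Finset.mem_insert.2 (Or.inr (Finset.mem_erase.2 ⟨hyv,
          Finset.mem_erase.2 ⟨hyu, hy⟩⟩)), hle _ _ hadj⟩
      have hDc : D.card < D'.card := by
        have h1 : ((D'.erase u).erase v).card = D'.card - 1 - 1 := by
          rw [Finset.card_erase_of_mem (Finset.mem_erase.2 ⟨huv.symm, hvD⟩),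
            Finset.card_erase_of_mem huD]
        have h2 := Finset.card_insert_le w ((D'.erase u).erase v)
        rw [hD]
        omega
      calc G.dominationNumber ≤ D.card := G.dominationNumber_le hdomG
        _ < D'.card := hDc
        _ = _ := hcard
  calc G.bondageNumber ≤ B.card := Nat.sInf_le ⟨B, hBsub, rfl, hdom⟩
    _ ≤ _ := hBcard


lemma degree_pos_of_connected (hconn : G.Connected) (hn : 2 ≤ Fintype.card V) (v : V) :
    1 ≤ G.degree v := by
  obtain ⟨u, hu⟩ := Fintype.exists_ne_of_one_lt_card (by omega) v
  obtain ⟨p⟩ := hconn.preconnected v u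
  cases p with
  | nil => exact absurd rfl hu
  | cons h _ => exact (G.degree_pos_iff_exists_adj v).2 ⟨_, h⟩

lemma exists_close_pair (hconn : G.Connected) (hn : 2 ≤ Fintype.card V) :
    ∃ u v : V, u ≠ v ∧ (G.Adj u v ∨ ∃ w, G.Adj u w ∧ G.Adj w v) ∧
      (Fintype.card V : ℤ) * (G.degree u + G.degree v) ≤ 4 * G.edgeFinset.card := by
  classical
  by_contra hcon
  push_neg at hcon
  set n : ℤ := (Fintype.card V : ℤ) with hn'
  set m : ℤ := (G.edgeFinset.card : ℤ) with hm'
  have hdeg : ∀ v : V, (1 : ℤ) ≤ G.degree v := fun v => by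
    exact_mod_cast G.degree_pos_of_connected hconn hn v
  have hsum : ∑ v : V, (G.degree v : ℤ) = 2 * m := by
    rw [hm', ← Nat.cast_ofNat, ← Nat.cast_mul, ← G.sum_degrees_eq_twice_card_edges]
    push_cast
    ring
  -- the set of "low-degree" vertices
  set L : Finset V := Finset.univ.filter (fun v => n * G.degree v ≤ 2 * m) with hL
  have hLmem : ∀ v : V, v ∈ L ↔ n * G.degree v ≤ 2 * m := by
    intro v; simp [hL]
  have hnpos : (0 : ℤ) < n := by rw [hn']; exact_mod_cast (by omega : 0 < Fintype.card V)
  have hLne : L.Nonempty := by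
    by_contra hLe
    rw [Finset.not_nonempty_iff_eq_empty] at hLe
    have h1 : ∀ v : V, 2 * m + 1 ≤ n * G.degree v := by
      intro v
      have := (hLmem v).not.1 (by rw [hLe]; exact Finset.notMem_empty v)
      omega
    have h2 : (Fintype.card V : ℤ) * (2 * m + 1) ≤ ∑ v : V, n * (G.degree v : ℤ) := by
      calc (Fintype.card V : ℤ) * (2 * m + 1) = Finset.univ.card • (2 * m + 1) := by
            rw [Finset.card_univ, nsmul_eq_mul]
        _ ≤ _ := Finset.card_nsmul_le_sum _ _ _ (fun v _ => h1 v)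
    rw [← Finset.mul_sum, hsum] at h2
    rw [← hn'] at h2
    nlinarith
  -- low-degree vertices have only high-degree neighbors
  have hnbr : ∀ u ∈ L, ∀ w ∈ G.neighborFinset u, 4 * m + 1 ≤ n * G.degree w + n * G.degree u := by
    intro u hu w hw
    rw [mem_neighborFinset] at hw
    have := hcon u w hw.ne (Or.inl hw)
    push_cast at this ⊢
    nlinarith [this]
  -- closed neighborhoods of low-degree vertices are pairwise disjoint
  set N : V → Finset V := fun u => insert u (G.neighborFinset u) with hN
  have hNcard : ∀ u : V, (N u).card = G.degree u + 1 := by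
    intro u
    rw [hN]
    rw [Finset.card_insert_of_notMem (by simp), card_neighborFinset_eq_degree]
  have hdisj : (↑L : Set V).PairwiseDisjoint N := by
    intro u hu v hv huv
    rw [Function.onFun, Finset.disjoint_left]
    intro x hxu hxv
    simp only [hN, Finset.mem_insert, mem_neighborFinset] at hxu hxv
    have hclose : G.Adj u v ∨ ∃ w, G.Adj u w ∧ G.Adj w v := by
      rcases hxu with rfl | hxu
      · rcases hxv with rfl | hxv
        · exact absurd rfl huv
        · exact Or.inl (G.adj_symm hxv)
      · rcases hxv with rfl | hxv
        · exact Or.inl hxu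
        · exact Or.inr ⟨x, hxu, G.adj_symm hxv⟩
    have h4 := hcon u v huv hclose
    rw [Finset.mem_coe, hLmem] at hu hv
    push_cast at h4
    nlinarith
  set U : Finset V := L.biUnion N with hU
  -- lower bound the degree sum over each closed neighborhood
  have hNsum : ∀ u ∈ L, 2 * m * ((G.degree u : ℤ) + 1) + 1 ≤ n * ∑ w ∈ N u, (G.degree w : ℤ) := by
    intro u hu
    have hu' := (hLmem u).1 hu
    have h1 : ∑ w ∈ N u, (G.degree w : ℤ) = G.degree u + ∑ w ∈ G.neighborFinset u, (G.degree w : ℤ) := by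
      rw [hN, Finset.sum_insert (by simp)]
    have h2 : (G.degree u : ℤ) * (4 * m + 1 - n * G.degree u) ≤
        ∑ w ∈ G.neighborFinset u, n * (G.degree w : ℤ) := by
      have := Finset.card_nsmul_le_sum (G.neighborFinset u)
        (fun w => n * (G.degree w : ℤ)) (4 * m + 1 - n * G.degree u)
        (fun w hw => by
          have h := hnbr u hu w hw
          show (4 * m + 1 - n * (G.degree u : ℤ)) ≤ n * (G.degree w : ℤ)
          linarith)
      rw [card_neighborFinset_eq_degree, nsmul_eq_mul] at this
      exact_mod_cast this
    rw [← Finset.mul_sum] at h2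
    have hd1 := hdeg u
    rw [h1, mul_add]
    nlinarith
  -- vertices outside U have high degree
  have hout : ∀ v : V, v ∉ U → 2 * m + 1 ≤ n * G.degree v := by
    intro v hv
    have hvL : v ∉ L := by
      intro h
      exact hv (Finset.mem_biUnion.2 ⟨v, h, by simp [hN]⟩)
    rw [hLmem] at hvL
    omega
  -- put everything together
  have hUcard : (U.card : ℤ) ≤ n := by
    rw [hn']
    exact_mod_cast Finset.card_le_card (Finset.subset_univ U)
  have hsplit : ∑ v : V, n * (G.degree v : ℤ) =
      (∑ v ∈ U, n * (G.degree v : ℤ)) + ∑ v ∈ Finset.univ \ U, n * (G.degree v : ℤ) := by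
    rw [← Finset.sum_sdiff (Finset.subset_univ U)]
    ring
  have hUsum : 2 * m * U.card + L.card ≤ ∑ v ∈ U, n * (G.degree v : ℤ) := by
    rw [hU, Finset.sum_biUnion hdisj]
    have hcardsum : (U.card : ℤ) = ∑ u ∈ L, ((G.degree u : ℤ) + 1) := by
      rw [hU, Finset.card_biUnion (fun u hu v hv huv => hdisj hu hv huv)]
      push_cast
      exact Finset.sum_congr rfl (fun u _ => by rw [hNcard u]; push_cast; ring)
    calc 2 * m * (U.card : ℤ) + L.card
        = ∑ u ∈ L, (2 * m * ((G.degree u : ℤ) + 1) + 1) := by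
          rw [Finset.sum_add_distrib, ← Finset.mul_sum, ← hcardsum, Finset.sum_const,
            nsmul_eq_mul, mul_one]
      _ ≤ ∑ u ∈ L, n * ∑ w ∈ N u, (G.degree w : ℤ) :=
          Finset.sum_le_sum (fun u hu => hNsum u hu)
      _ = ∑ u ∈ L, ∑ w ∈ N u, n * (G.degree w : ℤ) := by
          exact Finset.sum_congr rfl (fun u _ => Finset.mul_sum _ _ _)
  have houtsum : (2 * m + 1) * ((Finset.univ \ U).card : ℤ) ≤
      ∑ v ∈ Finset.univ \ U, n * (G.degree v : ℤ) := by
    have := Finset.card_nsmul_le_sum (Finset.univ \ U)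
      (fun v => n * (G.degree v : ℤ)) (2 * m + 1)
      (fun v hv => hout v (Finset.mem_sdiff.1 hv).2)
    rw [nsmul_eq_mul] at this
    linarith [this]
  have hcarddiff : ((Finset.univ \ U).card : ℤ) = n - U.card := by
    have h1 := Finset.card_sdiff_of_subset (Finset.subset_univ U)
    rw [Finset.card_univ] at h1
    have h2 := Finset.card_le_card (Finset.subset_univ U)
    rw [Finset.card_univ] at h2
    rw [hn', h1]
    omega
  have hLcard : (1 : ℤ) ≤ L.card := by exact_mod_cast Finset.card_pos.2 hLne
  have htotal : ∑ v : V, n * (G.degree v : ℤ) = 2 * m * n := by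
    rw [← Finset.mul_sum, hsum]; ring
  rw [hsplit] at htotal
  rw [hcarddiff] at houtsum
  nlinarith [hUsum, houtsum, hUcard, hLcard, htotal, hnpos]

end SimpleGraph

theorem stmt_7 {V : Type*} [Fintype V] [DecidableEq V] (G : SimpleGraph V)
    [DecidableRel G.Adj] (hconn : G.Connected) (hn : 2 ≤ Fintype.card V) (χ : ℤ)
    (hm : (G.edgeFinset.card : ℤ) ≤ 3 * ((Fintype.card V : ℤ) - χ)) :
    (Fintype.card V : ℤ) * (G.bondageNumber + 1) ≤ 12 * ((Fintype.card V : ℤ) - χ) := by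
  obtain ⟨u, v, huv, hclose, hle⟩ := G.exists_close_pair hconn hn
  have hb : G.bondageNumber ≤ G.degree u + G.degree v - 1 := by
    rcases hclose with hadj | ⟨w, huw, hwv⟩
    · exact G.bondageNumber_le_of_close huv hadj.symm (Or.inl rfl)
    · exact G.bondageNumber_le_of_close huv hwv.symm (Or.inr huw)
  have hdu : 1 ≤ G.degree u := G.degree_pos_of_connected hconn hn u
  have h1 : (G.bondageNumber : ℤ) + 1 ≤ (G.degree u : ℤ) + G.degree v := by
    have : G.bondageNumber + 1 ≤ G.degree u + G.degree v := by omega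
    exact_mod_cast this
  have hn0 : (0 : ℤ) ≤ (Fintype.card V : ℤ) := by positivity
  calc (Fintype.card V : ℤ) * (G.bondageNumber + 1)
      ≤ (Fintype.card V : ℤ) * ((G.degree u : ℤ) + G.degree v) :=
        mul_le_mul_of_nonneg_left h1 hn0
    _ ≤ 4 * G.edgeFinset.card := hle
    _ ≤ 12 * ((Fintype.card V : ℤ) - χ) := by linarith
end

section
/- Let G be a finite connected simple graph with n ≥ 2 vertices and m edges, and let h ≥ 1 be an integer. If m ≤ 3(n + 2h − 2) and n > 24(h − 1), then the bondage number satisfies b(G) ≤ 11. -/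
namespace Aux

open SimpleGraph Finset

variable {V : Type*} [Fintype V] [DecidableEq V]

lemma dom_nonempty (G : SimpleGraph V) :
    {k | ∃ D : Finset V, G.IsDominatingSet D ∧ D.card = k}.Nonempty :=
  ⟨(Finset.univ : Finset V).card, Finset.univ, fun v hv => (hv (Finset.mem_univ v)).elim, rfl⟩

lemma exists_min_dom (G : SimpleGraph V) :
    ∃ D : Finset V, G.IsDominatingSet D ∧ D.card = G.dominationNumber :=
  Nat.sInf_mem (dom_nonempty G)

lemma domNum_le (G : SimpleGraph V) {D : Finset V} (hD : G.IsDominatingSet D) :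
    G.dominationNumber ≤ D.card :=
  Nat.sInf_le ⟨D, hD, rfl⟩

set_option linter.unusedSectionVars false

lemma bondage_adj (G : SimpleGraph V) [DecidableRel G.Adj] {u v : V} (huv : G.Adj u v) :
    G.bondageNumber ≤ G.degree u + G.degree v - 1 := by
  classical
  set B : Finset (Sym2 V) := G.incidenceFinset u ∪ G.incidenceFinset v with hB
  have hBsub : ↑B ⊆ G.edgeSet := by
    intro e he
    simp only [hB, Finset.coe_union, Set.mem_union, Finset.mem_coe, mem_incidenceFinset] at he
    exact he.elim (fun h => h.1) (fun h => h.1)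
  -- card bound
  have hcard : B.card + 1 ≤ G.degree u + G.degree v := by
    have h1 : s(u, v) ∈ G.incidenceFinset u ∩ G.incidenceFinset v := by
      simp [mem_incidenceFinset, G.mk'_mem_incidenceSet_left_iff.2 huv,
        G.mk'_mem_incidenceSet_right_iff.2 huv]
    have h2 := Finset.card_union_add_card_inter (G.incidenceFinset u) (G.incidenceFinset v)
    have h3 : 1 ≤ (G.incidenceFinset u ∩ G.incidenceFinset v).card :=
      Finset.card_pos.2 ⟨_, h1⟩
    rw [← hB, card_incidenceFinset_eq_degree, card_incidenceFinset_eq_degree] at h2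
    omega
  -- all edges at u and v are in B
  have hu_edge : ∀ x : V, G.Adj u x → s(u, x) ∈ B := fun x hx =>
    Finset.mem_union_left _ ((G.mem_incidenceFinset _ _).2 (G.mk'_mem_incidenceSet_left_iff.2 hx))
  have hv_edge : ∀ x : V, G.Adj v x → s(v, x) ∈ B := fun x hx =>
    Finset.mem_union_right _ ((G.mem_incidenceFinset _ _).2 (G.mk'_mem_incidenceSet_left_iff.2 hx))
  set G' := G.deleteEdges ↑B with hG'
  have hG'u : ∀ x : V, ¬ G'.Adj x u := by
    intro x hx
    rw [hG', deleteEdges_adj] at hx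
    exact hx.2 (by rw [Sym2.eq_swap]; exact hu_edge x hx.1.symm)
  have hG'v : ∀ x : V, ¬ G'.Adj x v := by
    intro x hx
    rw [hG', deleteEdges_adj] at hx
    exact hx.2 (by rw [Sym2.eq_swap]; exact hv_edge x hx.1.symm)
  have hlt : G.dominationNumber < G'.dominationNumber := by
    obtain ⟨D, hD, hDcard⟩ := exists_min_dom G'
    have hu : u ∈ D := by
      by_contra hu
      obtain ⟨x, hxD, hx⟩ := hD u hu
      exact hG'u x hx
    have hv : v ∈ D := by
      by_contra hv
      obtain ⟨x, hxD, hx⟩ := hD v hv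
      exact hG'v x hx
    have hdom : G.IsDominatingSet (D.erase v) := by
      intro w hw
      by_cases hwv : w = v
      · exact ⟨u, Finset.mem_erase.2 ⟨huv.ne, hu⟩, hwv ▸ huv⟩
      · have hwD : w ∉ D := fun hwD => hw (Finset.mem_erase.2 ⟨hwv, hwD⟩)
        obtain ⟨x, hxD, hx⟩ := hD w hwD
        have hxv : x ≠ v := by rintro rfl; exact hG'v w hx.symm
        exact ⟨x, Finset.mem_erase.2 ⟨hxv, hxD⟩, (deleteEdges_adj.1 hx).1⟩
    have := domNum_le G hdom
    rw [Finset.card_erase_of_mem hv] at this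
    have hpos : 0 < D.card := Finset.card_pos.2 ⟨u, hu⟩
    omega
  calc G.bondageNumber ≤ B.card := Nat.sInf_le ⟨B, hBsub, rfl, hlt⟩
    _ ≤ G.degree u + G.degree v - 1 := by omega


lemma bondage_common (G : SimpleGraph V) [DecidableRel G.Adj] {u v w : V} (huv : u ≠ v)
    (huw : G.Adj u w) (hvw : G.Adj v w) :
    G.bondageNumber ≤ G.degree u + G.degree v - 1 := by
  classical
  have hwu : w ≠ u := huw.ne'
  have hwv : w ≠ v := hvw.ne'
  set B : Finset (Sym2 V) := (G.incidenceFinset u ∪ G.incidenceFinset v).erase s(v, w) with hB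
  have hBsub : ↑B ⊆ G.edgeSet := by
    intro e he
    simp only [hB, Finset.coe_erase, Set.mem_diff, Finset.coe_union, Set.mem_union,
      Finset.mem_coe, SimpleGraph.mem_incidenceFinset] at he
    exact he.1.elim (fun h => h.1) (fun h => h.1)
  have hcard : B.card + 1 ≤ G.degree u + G.degree v := by
    have h1 : s(v, w) ∈ G.incidenceFinset u ∪ G.incidenceFinset v :=
      Finset.mem_union_right _ ((G.mem_incidenceFinset _ _).2
        (G.mk'_mem_incidenceSet_left_iff.2 hvw))
    have h2 := Finset.card_erase_of_mem h1
    have h3 := Finset.card_union_le (G.incidenceFinset u) (G.incidenceFinset v)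
    rw [card_incidenceFinset_eq_degree, card_incidenceFinset_eq_degree] at h3
    have h4 : 0 < (G.incidenceFinset u ∪ G.incidenceFinset v).card :=
      Finset.card_pos.2 ⟨_, h1⟩
    rw [← hB] at h2
    omega
  -- all edges at u are in B
  have hu_edge : ∀ x : V, G.Adj u x → s(u, x) ∈ B := by
    intro x hx
    refine Finset.mem_erase.2 ⟨?_, Finset.mem_union_left _
      ((G.mem_incidenceFinset _ _).2 (G.mk'_mem_incidenceSet_left_iff.2 hx))⟩
    intro hcon
    rw [Sym2.eq_iff] at hcon
    rcases hcon with ⟨rfl, _⟩ | ⟨rfl, _⟩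
    · exact huv rfl
    · exact hwu rfl
  -- edges at v other than vw are in B
  have hv_edge : ∀ x : V, G.Adj v x → x ≠ w → s(v, x) ∈ B := by
    intro x hx hxw
    refine Finset.mem_erase.2 ⟨?_, Finset.mem_union_right _
      ((G.mem_incidenceFinset _ _).2 (G.mk'_mem_incidenceSet_left_iff.2 hx))⟩
    intro hcon
    rw [Sym2.eq_iff] at hcon
    rcases hcon with ⟨-, rfl⟩ | ⟨h1, -⟩
    · exact hxw rfl
    · exact hwv h1.symm
  set G' := G.deleteEdges ↑B with hG'
  have hG'u : ∀ x : V, ¬ G'.Adj x u := by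
    intro x hx
    rw [hG', SimpleGraph.deleteEdges_adj] at hx
    exact hx.2 (by rw [Sym2.eq_swap]; exact hu_edge x hx.1.symm)
  have hG'v : ∀ x : V, G'.Adj x v → x = w := by
    intro x hx
    by_contra hxw
    rw [hG', SimpleGraph.deleteEdges_adj] at hx
    exact hx.2 (by rw [Sym2.eq_swap]; exact hv_edge x hx.1.symm hxw)
  have hlt : G.dominationNumber < G'.dominationNumber := by
    obtain ⟨D, hD, hDcard⟩ := exists_min_dom G'
    have hu : u ∈ D := by
      by_contra hu
      obtain ⟨x, hxD, hx⟩ := hD u hu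
      exact hG'u x hx
    have hvD : v ∈ D ∨ w ∈ D := by
      by_cases hv : v ∈ D
      · exact Or.inl hv
      · obtain ⟨x, hxD, hx⟩ := hD v hv
        exact Or.inr ((hG'v x hx) ▸ hxD)
    by_cases hw : w ∈ D
    · -- D.erase u dominates G
      have hdom : G.IsDominatingSet (D.erase u) := by
        intro t ht
        by_cases htu : t = u
        · exact ⟨w, Finset.mem_erase.2 ⟨hwu, hw⟩, htu ▸ huw.symm⟩
        · have htD : t ∉ D := fun htD => ht (Finset.mem_erase.2 ⟨htu, htD⟩)
          obtain ⟨x, hxD, hx⟩ := hD t htD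
          have hxu : x ≠ u := by rintro rfl; exact hG'u t hx.symm
          exact ⟨x, Finset.mem_erase.2 ⟨hxu, hxD⟩, (SimpleGraph.deleteEdges_adj.1 hx).1⟩
      have := domNum_le G hdom
      rw [Finset.card_erase_of_mem hu] at this
      have hpos : 0 < D.card := Finset.card_pos.2 ⟨u, hu⟩
      omega
    · -- v ∈ D, w ∉ D
      have hv : v ∈ D := hvD.resolve_right hw
      set D' := insert w ((D.erase u).erase v) with hD'
      have hdom : G.IsDominatingSet D' := by
        intro t ht
        have hwD' : w ∈ D' := Finset.mem_insert_self _ _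
        by_cases htu : t = u
        · exact ⟨w, hwD', htu ▸ huw.symm⟩
        by_cases htv : t = v
        · exact ⟨w, hwD', htv ▸ hvw.symm⟩
        have htD : t ∉ D := by
          intro htD
          exact ht (Finset.mem_insert_of_mem
            (Finset.mem_erase.2 ⟨htv, Finset.mem_erase.2 ⟨htu, htD⟩⟩))
        obtain ⟨x, hxD, hx⟩ := hD t htD
        have hxu : x ≠ u := by rintro rfl; exact hG'u t hx.symm
        have hxv : x ≠ v := by
          rintro rfl
          have h2 := hG'v t hx.symm
          exact ht (by rw [h2]; exact hwD')
        exact ⟨x, Finset.mem_insert_of_mem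
          (Finset.mem_erase.2 ⟨hxv, Finset.mem_erase.2 ⟨hxu, hxD⟩⟩),
          (SimpleGraph.deleteEdges_adj.1 hx).1⟩
      have hle := domNum_le G hdom
      have hwD2 : w ∉ (D.erase u).erase v := fun hcon =>
        hw (Finset.mem_of_mem_erase (Finset.mem_of_mem_erase hcon))
      have hc1 : D'.card = ((D.erase u).erase v).card + 1 :=
        Finset.card_insert_of_notMem hwD2
      have hc2 : ((D.erase u).erase v).card = (D.erase u).card - 1 :=
        Finset.card_erase_of_mem (Finset.mem_erase.2 ⟨huv.symm, hv⟩)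
      have hc3 : (D.erase u).card = D.card - 1 := Finset.card_erase_of_mem hu
      have hpos : 2 ≤ D.card := Finset.one_lt_card.2 ⟨u, hu, v, hv, huv⟩
      omega
  calc G.bondageNumber ≤ B.card := Nat.sInf_le ⟨B, hBsub, rfl, hlt⟩
    _ ≤ G.degree u + G.degree v - 1 := by omega


lemma degree_ge_one (G : SimpleGraph V) [DecidableRel G.Adj] (hconn : G.Connected)
    (hn : 2 ≤ Fintype.card V) (v : V) : 1 ≤ G.degree v := by
  obtain ⟨u, hu⟩ := Fintype.exists_ne_of_one_lt_card (by omega) v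
  obtain ⟨p⟩ := hconn.preconnected v u
  cases p with
  | nil => exact absurd rfl hu.symm
  | cons ha q =>
    rw [Nat.one_le_iff_ne_zero, ← Nat.pos_iff_ne_zero, G.degree_pos_iff_exists_adj]
    exact ⟨_, ha⟩

lemma exists_good_pair (G : SimpleGraph V) [DecidableRel G.Adj] (hconn : G.Connected)
    (hn : 2 ≤ Fintype.card V) (h : ℕ) (hh : 1 ≤ h)
    (hm : G.edgeFinset.card ≤ 3 * (Fintype.card V + 2 * h - 2))
    (hbig : 24 * (h - 1) < Fintype.card V) :
    ∃ u v : V, u ≠ v ∧ (G.Adj u v ∨ ∃ w, G.Adj u w ∧ G.Adj v w) ∧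
      G.degree u + G.degree v ≤ 12 := by
  classical
  by_contra hcon
  push_neg at hcon
  -- hcon : ∀ u v, u ≠ v → (...) → 12 < degree u + degree v
  set n := Fintype.card V with hn'
  set A : Finset V := Finset.univ.filter (fun v => G.degree v ≤ 6) with hA
  set Bs : Finset V := Finset.univ.filter (fun v => ¬ G.degree v ≤ 6) with hBs
  have hpart : A.card + Bs.card = n := by
    rw [hA, hBs]
    exact Finset.card_filter_add_card_filter_not _
  have hdeg1 : ∀ v : V, 1 ≤ G.degree v := degree_ge_one G hconn hn
  -- neighbors of A-vertices are in Bs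
  have hAB : ∀ a ∈ A, ∀ x ∈ G.neighborFinset a, x ∈ Bs := by
    intro a ha x hx
    rw [SimpleGraph.mem_neighborFinset] at hx
    have h13 := hcon a x hx.ne (Or.inl hx)
    rw [hA, Finset.mem_filter] at ha
    rw [hBs, Finset.mem_filter]
    exact ⟨Finset.mem_univ _, by omega⟩
  -- neighborhoods of distinct A-vertices are disjoint
  have hdisj : ∀ a ∈ A, ∀ a' ∈ A, a ≠ a' →
      Disjoint (G.neighborFinset a) (G.neighborFinset a') := by
    intro a ha a' ha' hne
    rw [Finset.disjoint_left]
    intro x hx hx'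
    rw [SimpleGraph.mem_neighborFinset] at hx hx'
    have h13 := hcon a a' hne (Or.inr ⟨x, hx, hx'⟩)
    rw [hA, Finset.mem_filter] at ha ha'
    omega
  set T : Finset V := A.biUnion (fun a => G.neighborFinset a) with hT
  have hTcard : T.card = ∑ a ∈ A, G.degree a := by
    rw [hT, Finset.card_biUnion hdisj]
    exact Finset.sum_congr rfl fun a _ => G.card_neighborFinset_eq_degree a
  have hTsub : T ⊆ Bs := by
    intro x hx
    rw [hT, Finset.mem_biUnion] at hx
    obtain ⟨a, ha, hax⟩ := hx
    exact hAB a ha x hax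
  have hTsum : ∑ x ∈ T, G.degree x = ∑ a ∈ A, ∑ x ∈ G.neighborFinset a, G.degree x := by
    rw [hT]
    exact Finset.sum_biUnion fun a ha a' ha' hne => hdisj a ha a' ha' hne
  -- per-vertex inequality
  have hper : ∀ a ∈ A, 13 * G.degree a ≤
      (∑ x ∈ G.neighborFinset a, G.degree x) + G.degree a * G.degree a := by
    intro a ha
    have hstep : ∀ x ∈ G.neighborFinset a, 13 ≤ G.degree a + G.degree x := by
      intro x hx
      rw [SimpleGraph.mem_neighborFinset] at hx
      have := hcon a x hx.ne (Or.inl hx)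
      omega
    have h1 : ∑ x ∈ G.neighborFinset a, (13 : ℕ) ≤
        ∑ x ∈ G.neighborFinset a, (G.degree a + G.degree x) :=
      Finset.sum_le_sum hstep
    rw [Finset.sum_const, Finset.sum_add_distrib, Finset.sum_const,
      G.card_neighborFinset_eq_degree, smul_eq_mul, smul_eq_mul] at h1
    omega
  have hsum1 : 13 * ∑ a ∈ A, G.degree a ≤
      (∑ x ∈ T, G.degree x) + ∑ a ∈ A, G.degree a * G.degree a := by
    rw [Finset.mul_sum, hTsum, ← Finset.sum_add_distrib]
    exact Finset.sum_le_sum hper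
  have hquad : ∀ a ∈ A, G.degree a * G.degree a + 6 ≤ 7 * G.degree a := by
    intro a ha
    rw [hA, Finset.mem_filter] at ha
    have h1 := hdeg1 a
    have h2 := ha.2
    set d := G.degree a
    interval_cases d <;> norm_num
  have hsum2 : (∑ a ∈ A, G.degree a * G.degree a) + 6 * A.card ≤ 7 * ∑ a ∈ A, G.degree a := by
    calc (∑ a ∈ A, G.degree a * G.degree a) + 6 * A.card
        = ∑ a ∈ A, (G.degree a * G.degree a + 6) := by
          rw [Finset.sum_add_distrib, Finset.sum_const, smul_eq_mul]; ring
      _ ≤ ∑ a ∈ A, 7 * G.degree a := Finset.sum_le_sum hquad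
      _ = 7 * ∑ a ∈ A, G.degree a := (Finset.mul_sum _ _ _).symm
  have hsplit : (∑ x ∈ Bs \ T, G.degree x) + ∑ x ∈ T, G.degree x = ∑ x ∈ Bs, G.degree x :=
    Finset.sum_sdiff hTsub
  have hrest : 7 * (Bs \ T).card ≤ ∑ x ∈ Bs \ T, G.degree x := by
    calc 7 * (Bs \ T).card = ∑ _x ∈ Bs \ T, (7:ℕ) := by
          rw [Finset.sum_const, smul_eq_mul]; ring
      _ ≤ ∑ x ∈ Bs \ T, G.degree x := by
          refine Finset.sum_le_sum fun x hx => ?_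
          have := Finset.mem_sdiff.1 hx
          have h2 := this.1
          rw [hBs, Finset.mem_filter] at h2
          omega
  have hcardsd : (Bs \ T).card = Bs.card - T.card := Finset.card_sdiff_of_subset hTsub
  have hTle : T.card ≤ Bs.card := Finset.card_le_card hTsub
  have hnA : A.card ≤ ∑ a ∈ A, G.degree a := by
    calc A.card = ∑ _a ∈ A, (1:ℕ) := by rw [Finset.sum_const, smul_eq_mul]; ring
      _ ≤ ∑ a ∈ A, G.degree a := Finset.sum_le_sum fun a _ => hdeg1 a
  have htot : (∑ a ∈ A, G.degree a) + (∑ x ∈ Bs, G.degree x) = 2 * G.edgeFinset.card := by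
    rw [hA, hBs, Finset.sum_filter_add_sum_filter_not]
    exact G.sum_degrees_eq_twice_card_edges
  omega

end Aux

theorem stmt_9 {V : Type*} [Fintype V] [DecidableEq V] (G : SimpleGraph V)
    [DecidableRel G.Adj] (hconn : G.Connected) (hn : 2 ≤ Fintype.card V)
    (h : ℕ) (hh : 1 ≤ h)
    (hm : G.edgeFinset.card ≤ 3 * (Fintype.card V + 2 * h - 2))
    (hbig : 24 * (h - 1) < Fintype.card V) :
    G.bondageNumber ≤ 11 := by
  obtain ⟨u, v, huv, hcond, hsum⟩ := Aux.exists_good_pair G hconn hn h hh hm hbig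
  have hb : G.bondageNumber ≤ G.degree u + G.degree v - 1 := by
    rcases hcond with hadj | ⟨w, huw, hvw⟩
    · exact Aux.bondage_adj G hadj
    · exact Aux.bondage_common G huv huw hvw
  omega
end

section
/- Let G be a finite connected simple triangle-free graph with n ≥ 2 vertices and m edges, and let h ≥ 1 be an integer. If m ≤ 2(n + 2h − 2) and n > 16(h − 1), then the bondage number satisfies b(G) ≤ 7. -/
namespace BondageAux

open SimpleGraph Finset

variable {V : Type*} [Fintype V] [DecidableEq V]

lemma dom_univ (G : SimpleGraph V) : G.IsDominatingSet Finset.univ :=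
  fun v hv => absurd (Finset.mem_univ v) hv

lemma dom_le_card (G : SimpleGraph V) {D : Finset V} (hD : G.IsDominatingSet D) :
    G.dominationNumber ≤ D.card := Nat.sInf_le ⟨D, hD, rfl⟩

lemma exists_min_dom (G : SimpleGraph V) :
    ∃ D : Finset V, G.IsDominatingSet D ∧ D.card = G.dominationNumber := by
  have hne : {k | ∃ D : Finset V, G.IsDominatingSet D ∧ D.card = k}.Nonempty :=
    ⟨Finset.univ.card, Finset.univ, dom_univ G, rfl⟩
  exact Nat.sInf_mem hne

/-- If removing a dominating set's graph edge... the Hartnell–Rall style bound: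
if `u ≠ v` are at distance at most 2 and `deg u + deg v ≤ 8`, then `b(G) ≤ 7`. -/
lemma bondage_le_seven (G : SimpleGraph V) [DecidableRel G.Adj] {u v : V} (huv : u ≠ v)
    (hd : G.degree u + G.degree v ≤ 8)
    (hcase : G.Adj u v ∨ ∃ w, G.Adj u w ∧ G.Adj w v) :
    G.bondageNumber ≤ 7 := by
  -- In each case we produce a bondage set `B` with `|B| ≤ 7`.
  have key : ∃ B : Finset (Sym2 V), ↑B ⊆ G.edgeSet ∧ B.card ≤ 7 ∧
      G.dominationNumber < (G.deleteEdges ↑B).dominationNumber := by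
    rcases hcase with hadj | ⟨w, hadj1, hadj2⟩
    · -- u and v adjacent: delete all edges incident to u or v.
      set B : Finset (Sym2 V) := G.incidenceFinset u ∪ G.incidenceFinset v with hB
      have hsub : ↑B ⊆ G.edgeSet := by
        intro e he
        rw [Finset.mem_coe, hB, Finset.mem_union] at he
        rcases he with he | he <;>
          exact ((G.mem_incidenceFinset _ e).mp he).1
      have hmemB : s(u, v) ∈ G.incidenceFinset u ∩ G.incidenceFinset v := by
        rw [Finset.mem_inter, G.mem_incidenceFinset, G.mem_incidenceFinset]
        constructor
        · exact (G.mem_incidenceSet u v).mpr hadj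
        · rw [Sym2.eq_swap]; exact (G.mem_incidenceSet v u).mpr hadj.symm
      have hcard : B.card ≤ 7 := by
        have h1 := Finset.card_union_add_card_inter (G.incidenceFinset u) (G.incidenceFinset v)
        have h2 : 1 ≤ (G.incidenceFinset u ∩ G.incidenceFinset v).card :=
          Finset.card_pos.mpr ⟨_, hmemB⟩
        rw [G.card_incidenceFinset_eq_degree, G.card_incidenceFinset_eq_degree] at h1
        rw [hB]
        omega
      set H := G.deleteEdges (↑B : Set (Sym2 V)) with hH
      -- u and v are isolated in H
      have hiso : ∀ z x : V, z = u ∨ z = v → ¬ H.Adj x z := by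
        rintro z x hz hxz
        rw [hH, SimpleGraph.deleteEdges_adj] at hxz
        apply hxz.2
        rw [Finset.mem_coe, hB, Finset.mem_union]
        rcases hz with rfl | rfl
        · left
          rw [G.mem_incidenceFinset, Sym2.eq_swap]
          exact (G.mem_incidenceSet z x).mpr hxz.1.symm
        · right
          rw [G.mem_incidenceFinset, Sym2.eq_swap]
          exact (G.mem_incidenceSet z x).mpr hxz.1.symm
      obtain ⟨D, hDdom, hDcard⟩ := exists_min_dom H
      rw [hH] at hDcard
      have huD : u ∈ D := by
        by_contra hu
        obtain ⟨y, hyD, hy⟩ := hDdom u hu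
        exact hiso u y (Or.inl rfl) hy
      have hvD : v ∈ D := by
        by_contra hv
        obtain ⟨y, hyD, hy⟩ := hDdom v hv
        exact hiso v y (Or.inr rfl) hy
      have hdom' : G.IsDominatingSet (D.erase v) := by
        intro x hx
        by_cases hxv : x = v
        · exact ⟨u, Finset.mem_erase.mpr ⟨huv, huD⟩, hxv ▸ hadj⟩
        · have hxD : x ∉ D := fun hxD => hx (Finset.mem_erase.mpr ⟨hxv, hxD⟩)
          obtain ⟨y, hyD, hy⟩ := hDdom x hxD
          have hyv : y ≠ v := by
            rintro rfl
            exact hiso y x (Or.inr rfl) hy.symm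
          refine ⟨y, Finset.mem_erase.mpr ⟨hyv, hyD⟩, ?_⟩
          exact (SimpleGraph.deleteEdges_adj.mp hy).1
      have hle := dom_le_card G hdom'
      rw [Finset.card_erase_of_mem hvD] at hle
      have hpos : 0 < D.card := Finset.card_pos.mpr ⟨v, hvD⟩
      exact ⟨B, hsub, hcard, by omega⟩
    · -- common neighbor w: delete all edges at u and all edges at v except vw.
      have huw : u ≠ w := hadj1.ne
      have hwv : w ≠ v := hadj2.ne
      set B : Finset (Sym2 V) :=
        (G.incidenceFinset u ∪ G.incidenceFinset v).erase s(v, w) with hB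
      have hmemvw : s(v, w) ∈ G.incidenceFinset u ∪ G.incidenceFinset v := by
        rw [Finset.mem_union]
        right
        rw [G.mem_incidenceFinset]
        exact (G.mem_incidenceSet v w).mpr hadj2.symm
      have hsub : ↑B ⊆ G.edgeSet := by
        intro e he
        rw [Finset.mem_coe, hB] at he
        have := Finset.mem_of_mem_erase he
        rw [Finset.mem_union] at this
        rcases this with h' | h' <;> exact ((G.mem_incidenceFinset _ e).mp h').1
      have hcard : B.card ≤ 7 := by
        have h1 := Finset.card_union_le (G.incidenceFinset u) (G.incidenceFinset v)
        rw [G.card_incidenceFinset_eq_degree, G.card_incidenceFinset_eq_degree] at h1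
        have h2 := Finset.card_erase_of_mem hmemvw
        rw [hB]
        omega
      set H := G.deleteEdges (↑B : Set (Sym2 V)) with hH
      -- u is isolated in H
      have huiso : ∀ x : V, ¬ H.Adj x u := by
        intro x hxz
        rw [hH, SimpleGraph.deleteEdges_adj] at hxz
        apply hxz.2
        rw [Finset.mem_coe, hB, Finset.mem_erase]
        constructor
        · intro heq
          rcases Sym2.eq_iff.mp heq with ⟨h1, h2⟩ | ⟨h1, h2⟩
          · exact huw h2
          · exact huv h2
        · rw [Finset.mem_union]
          left
          rw [G.mem_incidenceFinset, Sym2.eq_swap]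
          exact (G.mem_incidenceSet u x).mpr hxz.1.symm
      -- the only possible neighbor of v in H is w
      have hvnb : ∀ x : V, H.Adj v x → x = w := by
        intro x hvx
        rw [hH, SimpleGraph.deleteEdges_adj] at hvx
        by_contra hxw
        apply hvx.2
        rw [Finset.mem_coe, hB, Finset.mem_erase]
        refine ⟨?_, ?_⟩
        · intro heq
          rcases Sym2.eq_iff.mp heq with ⟨h1, h2⟩ | ⟨h1, h2⟩
          · exact hxw h2
          · exact hwv h1.symm
        · rw [Finset.mem_union]
          right
          rw [G.mem_incidenceFinset]
          exact (G.mem_incidenceSet v x).mpr hvx.1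
      obtain ⟨D, hDdom, hDcard⟩ := exists_min_dom H
      rw [hH] at hDcard
      have huD : u ∈ D := by
        by_contra hu
        obtain ⟨y, hyD, hy⟩ := hDdom u hu
        exact huiso y hy
      by_cases hvD : v ∈ D
      · -- replace u, v by w
        set D' : Finset V := insert w ((D.erase u).erase v) with hD'
        have hdom' : G.IsDominatingSet D' := by
          intro x hx
          have hxw : x ≠ w := by
            rintro rfl; exact hx (Finset.mem_insert_self _ _)
          by_cases hxu : x = u
          · exact ⟨w, Finset.mem_insert_self _ _, hxu ▸ hadj1.symm⟩
          by_cases hxv : x = v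
          · exact ⟨w, Finset.mem_insert_self _ _, hxv ▸ hadj2⟩
          have hxD : x ∉ D := by
            intro hxD
            exact hx (Finset.mem_insert_of_mem
              (Finset.mem_erase.mpr ⟨hxv, Finset.mem_erase.mpr ⟨hxu, hxD⟩⟩))
          obtain ⟨y, hyD, hy⟩ := hDdom x hxD
          have hyu : y ≠ u := by
            rintro rfl; exact huiso x hy.symm
          have hyv : y ≠ v := by
            rintro rfl; exact hxw (hvnb x hy)
          refine ⟨y, Finset.mem_insert_of_mem
            (Finset.mem_erase.mpr ⟨hyv, Finset.mem_erase.mpr ⟨hyu, hyD⟩⟩), ?_⟩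
          exact (SimpleGraph.deleteEdges_adj.mp hy).1
        have hle := dom_le_card G hdom'
        have hc1 : D'.card ≤ ((D.erase u).erase v).card + 1 := Finset.card_insert_le _ _
        have hc2 : ((D.erase u).erase v).card = (D.erase u).card - 1 :=
          Finset.card_erase_of_mem (Finset.mem_erase.mpr ⟨huv.symm, hvD⟩)
        have hc3 : (D.erase u).card = D.card - 1 := Finset.card_erase_of_mem huD
        have hpos : 2 ≤ D.card :=
          Finset.one_lt_card.mpr ⟨u, huD, v, hvD, huv⟩
        exact ⟨B, hsub, hcard, by omega⟩
      · -- then w ∈ D; drop u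
        have hwD : w ∈ D := by
          obtain ⟨y, hyD, hy⟩ := hDdom v hvD
          have := hvnb y hy.symm
          rwa [this] at hyD
        have hdom' : G.IsDominatingSet (D.erase u) := by
          intro x hx
          by_cases hxu : x = u
          · exact ⟨w, Finset.mem_erase.mpr ⟨huw.symm, hwD⟩, hxu ▸ hadj1.symm⟩
          · have hxD : x ∉ D := fun hxD => hx (Finset.mem_erase.mpr ⟨hxu, hxD⟩)
            obtain ⟨y, hyD, hy⟩ := hDdom x hxD
            have hyu : y ≠ u := by
              rintro rfl; exact huiso x hy.symm
            exact ⟨y, Finset.mem_erase.mpr ⟨hyu, hyD⟩,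
              (SimpleGraph.deleteEdges_adj.mp hy).1⟩
        have hle := dom_le_card G hdom'
        rw [Finset.card_erase_of_mem huD] at hle
        have hpos : 0 < D.card := Finset.card_pos.mpr ⟨u, huD⟩
        exact ⟨B, hsub, hcard, by omega⟩
  obtain ⟨B, hsub, hcard, hlt⟩ := key
  exact le_trans (Nat.sInf_le ⟨B, hsub, rfl, hlt⟩) hcard

/-- Discharging argument: there exist distinct vertices at distance at most 2
with degree sum at most 8. -/
lemma exists_close_pair (G : SimpleGraph V) [DecidableRel G.Adj]
    (hdeg : ∀ v : V, 1 ≤ G.degree v) (h : ℕ) (hh : 1 ≤ h)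
    (hn : 2 ≤ Fintype.card V)
    (hm : G.edgeFinset.card ≤ 2 * (Fintype.card V + 2 * h - 2))
    (hbig : 16 * (h - 1) < Fintype.card V) :
    ∃ u v : V, u ≠ v ∧ (G.Adj u v ∨ ∃ w, G.Adj u w ∧ G.Adj w v) ∧
      G.degree u + G.degree v ≤ 8 := by
  by_contra hcon
  push_neg at hcon
  -- every vertex has a neighbor
  have hex : ∀ v : V, ∃ u, G.Adj v u := fun v =>
    (G.degree_pos_iff_exists_adj v).mp (hdeg v)
  set f : V → V := fun v => (hex v).choose with hf
  have hfadj : ∀ v, G.Adj v (f v) := fun v => (hex v).choose_spec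
  have hkey : ∀ v : V, 9 ≤ G.degree v + G.degree (f v) := by
    intro v
    have := hcon v (f v) (hfadj v).ne (Or.inl (hfadj v))
    omega
  set A : Finset V := Finset.univ.filter (fun v => G.degree v ≤ 4) with hA
  set Bs : Finset V := Finset.univ.filter (fun v => ¬ G.degree v ≤ 4) with hBs
  -- f is injective on A
  have hinj : ∀ a ∈ A, ∀ b ∈ A, f a = f b → a = b := by
    intro a ha b hb hfab
    by_contra hab
    have h1 : G.Adj a (f a) := hfadj a
    have h2 : G.Adj (f a) b := by rw [hfab]; exact (hfadj b).symm
    have := hcon a b hab (Or.inr ⟨f a, h1, h2⟩)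
    rw [hA, Finset.mem_filter] at ha hb
    omega
  -- f maps A into Bs
  have hmaps : ∀ a ∈ A, f a ∈ Bs := by
    intro a ha
    rw [hA, Finset.mem_filter] at ha
    rw [hBs, Finset.mem_filter]
    have := hkey a
    exact ⟨Finset.mem_univ _, by omega⟩
  -- sum comparison over the integers
  have hstep1 : ∑ v ∈ A, ((9 : ℤ) - 2 * G.degree v) ≤
      ∑ v ∈ A, (2 * (G.degree (f v) : ℤ) - 9) := by
    apply Finset.sum_le_sum
    intro v hv
    rw [hA, Finset.mem_filter] at hv
    have := hkey v
    have h4 : G.degree v ≤ 4 := hv.2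
    have : (9 : ℤ) ≤ (G.degree v : ℤ) + (G.degree (f v) : ℤ) := by exact_mod_cast hkey v
    linarith
  have hstep2 : ∑ v ∈ A, (2 * (G.degree (f v) : ℤ) - 9) =
      ∑ u ∈ A.image f, (2 * (G.degree u : ℤ) - 9) :=
    (Finset.sum_image (f := fun u => 2 * (G.degree u : ℤ) - 9) hinj).symm
  have hstep3 : ∑ u ∈ A.image f, (2 * (G.degree u : ℤ) - 9) ≤
      ∑ u ∈ Bs, (2 * (G.degree u : ℤ) - 9) := by
    apply Finset.sum_le_sum_of_subset_of_nonneg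
    · intro x hx
      obtain ⟨a, ha, rfl⟩ := Finset.mem_image.mp hx
      exact hmaps a ha
    · intro i hi _
      rw [hBs, Finset.mem_filter] at hi
      have : 5 ≤ G.degree i := by omega
      have : (5 : ℤ) ≤ (G.degree i : ℤ) := by exact_mod_cast this
      linarith
  have htotal : 0 ≤ ∑ v : V, (2 * (G.degree v : ℤ) - 9) := by
    have hsplit := Finset.sum_filter_add_sum_filter_not Finset.univ
      (fun v => G.degree v ≤ 4) (fun v => 2 * (G.degree v : ℤ) - 9)
    rw [← hA, ← hBs] at hsplit
    have : ∑ v ∈ A, (2 * (G.degree v : ℤ) - 9) ≥ - ∑ v ∈ A, ((9:ℤ) - 2 * G.degree v) := by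
      rw [← Finset.sum_neg_distrib]
      apply le_of_eq
      apply Finset.sum_congr rfl
      intro x _
      ring
    have hAB : - ∑ v ∈ A, ((9:ℤ) - 2 * G.degree v) + ∑ u ∈ Bs, (2 * (G.degree u : ℤ) - 9) ≥ 0 := by
      have := hstep1.trans (hstep2.le.trans hstep3)
      linarith
    linarith [hsplit.symm ▸ (by linarith : (0:ℤ) ≤ ∑ v ∈ A, (2 * (G.degree v : ℤ) - 9) + ∑ v ∈ Bs, (2 * (G.degree v : ℤ) - 9))]
  -- turn into a counting contradiction
  have hsum : ∑ v : V, (2 * (G.degree v : ℤ) - 9) =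
      2 * (∑ v : V, (G.degree v : ℤ)) - 9 * (Fintype.card V : ℤ) := by
    rw [Finset.sum_sub_distrib, Finset.mul_sum, Finset.sum_const, Finset.card_univ]
    ring
  have hdegsum : ∑ v : V, (G.degree v : ℤ) = 2 * (G.edgeFinset.card : ℤ) := by
    exact_mod_cast congrArg (Nat.cast : ℕ → ℤ) G.sum_degrees_eq_twice_card_edges
  rw [hsum, hdegsum] at htotal
  have hfin : 9 * (Fintype.card V) ≤ 4 * G.edgeFinset.card := by
    have : (9 : ℤ) * (Fintype.card V : ℤ) ≤ 4 * (G.edgeFinset.card : ℤ) := by linarith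
    exact_mod_cast this
  omega

end BondageAux

theorem stmt_15 {V : Type*} [Fintype V] [DecidableEq V] (G : SimpleGraph V)
    [DecidableRel G.Adj] (hconn : G.Connected) (htf : G.CliqueFree 3)
    (hn : 2 ≤ Fintype.card V) (h : ℕ) (hh : 1 ≤ h)
    (hm : G.edgeFinset.card ≤ 2 * (Fintype.card V + 2 * h - 2))
    (hbig : 16 * (h - 1) < Fintype.card V) :
    G.bondageNumber ≤ 7 := by
  have hdeg : ∀ v : V, 1 ≤ G.degree v := by
    intro v
    obtain ⟨u, hu⟩ := Fintype.exists_ne_of_one_lt_card (by omega) v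
    obtain ⟨p⟩ := hconn.preconnected v u
    cases p with
    | nil => exact absurd rfl hu.symm
    | cons hadj q =>
      rw [Nat.succ_le_iff, ← SimpleGraph.card_neighborFinset_eq_degree]
      exact Finset.card_pos.mpr ⟨_, (G.mem_neighborFinset _ _).mpr hadj⟩
  obtain ⟨u, v, huv, hclose, hsum⟩ :=
    BondageAux.exists_close_pair G hdeg h hh hn hm hbig
  exact BondageAux.bondage_le_seven G huv hsum hclose
end

section
/- Let G be a finite connected simple triangle-free graph with n ≥ 2 vertices and m edges, and let k ≥ 2 be an integer. If m ≤ 2(n + k − 2) and n > 8(k − 2), then the bondage number satisfies b(G) ≤ 7. -/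
open Finset

section Aux
variable {V : Type*} [Fintype V] [DecidableEq V] (G : SimpleGraph V)

lemma aux_dom_nonempty :
    {k | ∃ D : Finset V, G.IsDominatingSet D ∧ D.card = k}.Nonempty :=
  ⟨(univ : Finset V).card, univ, fun v hv => absurd (mem_univ v) hv, rfl⟩

lemma aux_exists_min_dom :
    ∃ D : Finset V, G.IsDominatingSet D ∧ D.card = G.dominationNumber :=
  Nat.sInf_mem (aux_dom_nonempty G)

lemma aux_dom_le {D : Finset V} (hD : G.IsDominatingSet D) :
    G.dominationNumber ≤ D.card :=
  Nat.sInf_le ⟨D, hD, rfl⟩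

/-- Hartnell–Rall style bondage set for vertices at distance at most 2. -/
lemma aux_exists_bondage_set [DecidableRel G.Adj] (u v w : V) (huv : u ≠ v)
    (h1 : G.Adj u w) (h2 : G.Adj w v ∨ w = v) :
    ∃ B : Finset (Sym2 V), ↑B ⊆ G.edgeSet ∧ B.card + 1 ≤ G.degree u + G.degree v ∧
      G.dominationNumber < (G.deleteEdges ↑B).dominationNumber := by
  set B : Finset (Sym2 V) :=
    ((G.incidenceFinset u).erase s(u, w)) ∪ G.incidenceFinset v with hBdef
  have hsub : ↑B ⊆ G.edgeSet := by
    intro e he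
    simp only [hBdef, coe_union, Set.mem_union, coe_erase, Set.mem_diff,
      mem_coe, SimpleGraph.mem_incidenceFinset] at he
    rcases he with ⟨he, _⟩ | he
    · exact he.1
    · exact he.1
  have hcard : B.card + 1 ≤ G.degree u + G.degree v := by
    have h1' : s(u, w) ∈ G.incidenceFinset u := by
      rw [SimpleGraph.mem_incidenceFinset]
      exact (SimpleGraph.mk'_mem_incidenceSet_left_iff G).2 h1
    have he : ((G.incidenceFinset u).erase s(u, w)).card = G.degree u - 1 := by
      rw [card_erase_of_mem h1', G.card_incidenceFinset_eq_degree]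
    have hdu : 1 ≤ G.degree u := (G.degree_pos_iff_exists_adj u).2 ⟨w, h1⟩
    have hle := card_union_le ((G.incidenceFinset u).erase s(u, w)) (G.incidenceFinset v)
    rw [he, G.card_incidenceFinset_eq_degree] at hle
    rw [hBdef]
    omega
  refine ⟨B, hsub, hcard, ?_⟩
  set G' := G.deleteEdges (↑B : Set (Sym2 V)) with hG'
  have hGle : ∀ a b : V, G'.Adj a b → G.Adj a b := by
    intro a b h
    rw [hG', SimpleGraph.deleteEdges_adj] at h
    exact h.1
  have hviso : ∀ x : V, ¬ G'.Adj v x := by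
    intro x hx
    rw [hG', SimpleGraph.deleteEdges_adj] at hx
    refine hx.2 (Finset.mem_coe.2 (Finset.mem_union_right _ ?_))
    rw [SimpleGraph.mem_incidenceFinset]
    exact (SimpleGraph.mk'_mem_incidenceSet_left_iff G).2 hx.1
  have huonly : ∀ x : V, G'.Adj u x → x = w := by
    intro x hx
    rw [hG', SimpleGraph.deleteEdges_adj] at hx
    by_contra hxw
    refine hx.2 (Finset.mem_coe.2 (Finset.mem_union_left _ ?_))
    refine Finset.mem_erase.2 ⟨?_, ?_⟩
    · intro hcontra
      rcases Sym2.eq_iff.1 hcontra with ⟨_, h⟩ | ⟨h, _⟩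
      · exact hxw h
      · exact (G.ne_of_adj h1) h
    · rw [SimpleGraph.mem_incidenceFinset]
      exact (SimpleGraph.mk'_mem_incidenceSet_left_iff G).2 hx.1
  obtain ⟨D', hD', hDcard⟩ := aux_exists_min_dom G'
  have hvD : v ∈ D' := by
    by_contra hv
    obtain ⟨y, hyD, hy⟩ := hD' v hv
    exact hviso y hy.symm
  -- show there is a dominating set of G with card + 1 ≤ D'.card
  have main : ∃ D : Finset V, G.IsDominatingSet D ∧ D.card + 1 ≤ D'.card := by
    by_cases hu : u ∈ D'
    · refine ⟨insert w ((D'.erase u).erase v), ?_, ?_⟩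
      · intro x hx
        have hxw : x ≠ w := fun e => hx (by rw [e]; exact mem_insert_self w _)
        by_cases hxu : x = u
        · subst hxu; exact ⟨w, mem_insert_self w _, h1.symm⟩
        by_cases hxv : x = v
        · subst hxv
          rcases h2 with h2 | h2
          · exact ⟨w, mem_insert_self w _, h2⟩
          · exact absurd h2.symm hxw
        have hxD : x ∉ D' := by
          intro hmem
          exact hx (mem_insert_of_mem (mem_erase.2 ⟨hxv, mem_erase.2 ⟨hxu, hmem⟩⟩))
        obtain ⟨y, hyD, hy⟩ := hD' x hxD
        have hyv : y ≠ v := fun e => hviso x (e ▸ hy)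
        have hyu : y ≠ u := by
          intro e
          exact hxw (huonly x (e ▸ hy))
        exact ⟨y, mem_insert_of_mem (mem_erase.2 ⟨hyv, mem_erase.2 ⟨hyu, hyD⟩⟩),
          hGle y x hy⟩
      · have h2le : 2 ≤ D'.card := one_lt_card.2 ⟨u, hu, v, hvD, huv⟩
        have hvmem : v ∈ D'.erase u := mem_erase.2 ⟨Ne.symm huv, hvD⟩
        have := card_insert_le w ((D'.erase u).erase v)
        rw [card_erase_of_mem hvmem, card_erase_of_mem hu] at this
        omega
    · obtain ⟨y, hyD, hy⟩ := hD' u hu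
      have hyw : y = w := huonly y hy.symm
      subst hyw
      have hwv : y ≠ v := fun e => hviso u (e ▸ hy)
      have hadj : G.Adj y v := by
        rcases h2 with h2 | h2
        · exact h2
        · exact absurd h2 hwv
      refine ⟨D'.erase v, ?_, ?_⟩
      · intro x hx
        by_cases hxv : x = v
        · subst hxv; exact ⟨y, mem_erase.2 ⟨hwv, hyD⟩, hadj⟩
        have hxD : x ∉ D' := fun hmem => hx (mem_erase.2 ⟨hxv, hmem⟩)
        obtain ⟨z, hzD, hz⟩ := hD' x hxD
        have hzv : z ≠ v := fun e => hviso x (e ▸ hz)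
        exact ⟨z, mem_erase.2 ⟨hzv, hzD⟩, hGle z x hz⟩
      · rw [card_erase_of_mem hvD]
        have : 1 ≤ D'.card := card_pos.2 ⟨v, hvD⟩
        omega
  obtain ⟨D, hD, hDc⟩ := main
  calc G.dominationNumber ≤ D.card := aux_dom_le G hD
    _ < D'.card := by omega
    _ = G'.dominationNumber := hDcard

end Aux

theorem stmt_16 {V : Type*} [Fintype V] [DecidableEq V] (G : SimpleGraph V)
    [DecidableRel G.Adj] (hconn : G.Connected) (htf : G.CliqueFree 3)
    (hn : 2 ≤ Fintype.card V) (k : ℕ) (hk : 2 ≤ k)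
    (hm : G.edgeFinset.card ≤ 2 * (Fintype.card V + k - 2))
    (hbig : 8 * (k - 2) < Fintype.card V) :
    G.bondageNumber ≤ 7 := by
  -- every vertex has positive degree
  have hdegpos : ∀ x : V, 1 ≤ G.degree x := by
    intro x
    obtain ⟨y, hy⟩ := Fintype.exists_ne_of_one_lt_card (by omega) x
    obtain ⟨p⟩ := hconn.preconnected x y
    cases p with
    | nil => exact absurd rfl hy.symm
    | cons h _ => exact (G.degree_pos_iff_exists_adj x).2 ⟨_, h⟩
  -- there exist distinct u v at distance ≤ 2 with degree sum ≤ 8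
  have key : ∃ u v : V, u ≠ v ∧ (G.Adj u v ∨ ∃ w, G.Adj u w ∧ G.Adj w v) ∧
      G.degree u + G.degree v ≤ 8 := by
    by_contra hc
    push_neg at hc
    -- hc : ∀ u v, u ≠ v → (Adj ∨ common nbr) → 8 < deg u + deg v
    set n := Fintype.card V with hndef
    set S : Finset V := univ.filter (fun x => G.degree x ≤ 4) with hSdef
    have hSmem : ∀ x, x ∈ S ↔ G.degree x ≤ 4 := by
      intro x; simp [hSdef]
    -- neighbors of small vertices are large
    have hnbr : ∀ x ∈ S, ∀ y ∈ G.neighborFinset x, 9 - G.degree x ≤ G.degree y := by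
      intro x hx y hy
      rw [SimpleGraph.mem_neighborFinset] at hy
      have := hc x y (G.ne_of_adj hy) (Or.inl hy)
      omega
    have hnbr5 : ∀ x ∈ S, ∀ y ∈ G.neighborFinset x, 5 ≤ G.degree y := by
      intro x hx y hy
      have h1 := hnbr x hx y hy
      have h2 := (hSmem x).1 hx
      omega
    -- neighborhoods of distinct small vertices are disjoint
    have hdisj : ∀ x ∈ S, ∀ y ∈ S, x ≠ y →
        Disjoint (G.neighborFinset x) (G.neighborFinset y) := by
      intro x hx y hy hxy
      rw [disjoint_left]
      intro z hzx hzy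
      rw [SimpleGraph.mem_neighborFinset] at hzx hzy
      have := hc x y hxy (Or.inr ⟨z, hzx, hzy.symm⟩)
      have h1 := (hSmem x).1 hx
      have h2 := (hSmem y).1 hy
      omega
    set T : Finset V := S.biUnion (fun x => G.neighborFinset x) with hTdef
    have hST : Disjoint S T := by
      rw [disjoint_left]
      intro x hx hxT
      rw [hTdef, mem_biUnion] at hxT
      obtain ⟨y, hyS, hxy⟩ := hxT
      have := hnbr5 y hyS x hxy
      have := (hSmem x).1 hx
      omega
    have hTcard : T.card = ∑ x ∈ S, G.degree x := by
      rw [hTdef, card_biUnion hdisj]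
      exact Finset.sum_congr rfl fun x _ => G.card_neighborFinset_eq_degree x
    -- sum of degrees over T
    have hTsum : ∑ x ∈ S, G.degree x * (9 - G.degree x) ≤ ∑ y ∈ T, G.degree y := by
      rw [hTdef, Finset.sum_biUnion hdisj]
      refine Finset.sum_le_sum fun x hx => ?_
      have h : (G.neighborFinset x).card • (9 - G.degree x) ≤
          ∑ y ∈ G.neighborFinset x, G.degree y :=
        Finset.card_nsmul_le_sum _ _ _ (hnbr x hx)
      rw [smul_eq_mul, G.card_neighborFinset_eq_degree] at h
      exact h
    -- decomposition of the total degree sum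
    have htotal : ∑ x ∈ S, G.degree x + ∑ x ∈ T, G.degree x +
        ∑ x ∈ univ \ (S ∪ T), G.degree x = 2 * G.edgeFinset.card := by
      rw [← SimpleGraph.sum_degrees_eq_twice_card_edges]
      rw [← Finset.sum_union hST]
      rw [← Finset.sum_sdiff (subset_univ (S ∪ T))]
      ring
    -- rest vertices are large
    have hrest : 5 * (univ \ (S ∪ T)).card ≤ ∑ x ∈ univ \ (S ∪ T), G.degree x := by
      have h : (univ \ (S ∪ T)).card • 5 ≤ ∑ x ∈ univ \ (S ∪ T), G.degree x :=
        Finset.card_nsmul_le_sum _ _ _ (fun x hx => by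
          rw [mem_sdiff, mem_union] at hx
          have hxS : x ∉ S := fun h => hx.2 (Or.inl h)
          rw [hSmem] at hxS
          omega)
      rw [smul_eq_mul] at h
      omega
    -- cardinalities
    have hcards : S.card + T.card + (univ \ (S ∪ T)).card = n := by
      have h1 : (S ∪ T).card = S.card + T.card := card_union_of_disjoint hST
      have h2 : (S ∪ T).card + (univ \ (S ∪ T)).card = n := by
        rw [← card_union_of_disjoint Finset.disjoint_sdiff,
          Finset.union_sdiff_of_subset (subset_univ _), Finset.card_univ]
      omega
    -- pointwise inequality on small degrees
    have hpt : ∀ x ∈ S, 4 + 4 * G.degree x ≤ G.degree x * (9 - G.degree x) := by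
      intro x hx
      have h1 := hdegpos x
      have h2 := (hSmem x).1 hx
      interval_cases (G.degree x) <;> norm_num
    have hpts : 4 * S.card + 4 * ∑ x ∈ S, G.degree x ≤
        ∑ x ∈ S, G.degree x * (9 - G.degree x) := by
      have h := Finset.sum_le_sum hpt
      rw [Finset.sum_add_distrib, Finset.sum_const, smul_eq_mul, ← Finset.mul_sum] at h
      omega
    have hsA : S.card ≤ ∑ x ∈ S, G.degree x := by
      have h : S.card • 1 ≤ ∑ x ∈ S, G.degree x :=
        Finset.card_nsmul_le_sum _ _ _ fun x _ => hdegpos x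
      simpa using h
    -- the arithmetic contradiction
    have hmlt : 4 * G.edgeFinset.card < 9 * n := by
      have : n = Fintype.card V := rfl
      omega
    omega
  obtain ⟨u, v, huv, hadj, hsum⟩ := key
  have hB : ∃ B : Finset (Sym2 V), ↑B ⊆ G.edgeSet ∧ B.card + 1 ≤ G.degree u + G.degree v ∧
      G.dominationNumber < (G.deleteEdges ↑B).dominationNumber := by
    rcases hadj with h | ⟨w, hw1, hw2⟩
    · exact aux_exists_bondage_set G u v v huv h (Or.inr rfl)
    · exact aux_exists_bondage_set G u v w huv hw1 (Or.inl hw2)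
  obtain ⟨B, hsub, hcard, hlt⟩ := hB
  have hmem : B.card ∈ {k | ∃ B' : Finset (Sym2 V), ↑B' ⊆ G.edgeSet ∧ B'.card = k ∧
      G.dominationNumber < (G.deleteEdges ↑B').dominationNumber} := ⟨B, hsub, rfl, hlt⟩
  calc G.bondageNumber ≤ B.card := Nat.sInf_le hmem
    _ ≤ 7 := by omega
end

section
/- Let G be a finite connected simple triangle-free graph with n vertices and m edges, and let h ≥ 2 be an integer. If m ≤ 2(n + 2h − 2) and 2(1 + √(2h)) ≤ n ≤ 16(h − 1), then the bondage number satisfies b(G) ≤ 7 + 8(h − 1)/(1 + √(2h)). -/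
section BondageAux

open Finset

variable {V : Type*} [Fintype V] [DecidableEq V]

lemma isDom_univ (G : SimpleGraph V) : G.IsDominatingSet (univ : Finset V) :=
  fun v hv => absurd (Finset.mem_univ v) hv

lemma domNonempty (G : SimpleGraph V) :
    {k | ∃ D : Finset V, G.IsDominatingSet D ∧ D.card = k}.Nonempty :=
  ⟨(univ : Finset V).card, (univ : Finset V), isDom_univ G, rfl⟩

lemma domNumber_le (G : SimpleGraph V) {D : Finset V} (hD : G.IsDominatingSet D) :
    G.dominationNumber ≤ D.card := Nat.sInf_le ⟨D, hD, rfl⟩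

lemma exists_minDom (G : SimpleGraph V) :
    ∃ D : Finset V, G.IsDominatingSet D ∧ D.card = G.dominationNumber :=
  Nat.sInf_mem (domNonempty G)

lemma pos_degree (G : SimpleGraph V) [DecidableRel G.Adj] (hconn : G.Connected)
    (hn : 2 ≤ Fintype.card V) (x : V) : 1 ≤ G.degree x := by
  obtain ⟨y, hy⟩ := Fintype.exists_ne_of_one_lt_card (by omega) x
  obtain ⟨p⟩ := hconn.preconnected x y
  cases p with
  | nil => exact absurd rfl hy
  | cons hadj q =>
    rw [← SimpleGraph.card_neighborFinset_eq_degree]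
    exact Finset.card_pos.2 ⟨_, (SimpleGraph.mem_neighborFinset G x _).2 hadj⟩

/-- Key bondage bound: if `u ≠ v` are adjacent or at distance two, then
`b(G) ≤ deg u + deg v - 1`. -/
lemma bondage_le (G : SimpleGraph V) [DecidableRel G.Adj] {u v : V} (huv : u ≠ v)
    (hrel : G.Adj u v ∨ ∃ w, G.Adj u w ∧ G.Adj w v) :
    G.bondageNumber ≤ G.degree u + G.degree v - 1 := by
  by_cases hadj : G.Adj u v
  · -- adjacent case
    set B : Finset (Sym2 V) := G.incidenceFinset u ∪ G.incidenceFinset v with hB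
    have hmemB : ∀ a b : V, G.Adj a b → (a = u ∨ a = v ∨ b = u ∨ b = v) → s(a, b) ∈ B := by
      intro a b hab hc
      simp only [hB, Finset.mem_union, SimpleGraph.mem_incidenceFinset,
        SimpleGraph.mk'_mem_incidenceSet_iff]
      obtain rfl | rfl | rfl | rfl := hc <;> simp [hab]
    have hsub : (↑B : Set (Sym2 V)) ⊆ G.edgeSet := by
      intro e he
      simp only [hB, Finset.coe_union, Set.mem_union, Finset.mem_coe,
        SimpleGraph.mem_incidenceFinset] at he
      exact he.elim (fun h' => G.incidenceSet_subset u h') (fun h' => G.incidenceSet_subset v h')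
    have hcard : B.card = G.degree u + G.degree v - 1 := by
      have hic : G.incidenceFinset u ∩ G.incidenceFinset v = {s(u, v)} := by
        ext e
        simp only [Finset.mem_inter, SimpleGraph.mem_incidenceFinset, Finset.mem_singleton]
        constructor
        · rintro ⟨h1, h2⟩; exact (Sym2.mem_and_mem_iff huv).1 ⟨h1.2, h2.2⟩
        · rintro rfl
          exact ⟨G.mk'_mem_incidenceSet_left_iff.2 hadj, G.mk'_mem_incidenceSet_right_iff.2 hadj⟩
      have hcui := Finset.card_union_add_card_inter (G.incidenceFinset u) (G.incidenceFinset v)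
      rw [hic] at hcui
      simp only [Finset.card_singleton, SimpleGraph.card_incidenceFinset_eq_degree] at hcui
      rw [← hB] at hcui
      omega
    have hlt : G.dominationNumber < (G.deleteEdges (↑B : Set (Sym2 V))).dominationNumber := by
      obtain ⟨D, hD, hDcard⟩ := exists_minDom (G.deleteEdges (↑B : Set (Sym2 V)))
      have hGB : ∀ a b : V, (G.deleteEdges (↑B : Set (Sym2 V))).Adj a b →
          G.Adj a b ∧ a ≠ u ∧ a ≠ v ∧ b ≠ u ∧ b ≠ v := by
        intro a b hab
        rw [SimpleGraph.deleteEdges_adj] at hab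
        obtain ⟨hab, hnB⟩ := hab
        refine ⟨hab, ?_, ?_, ?_, ?_⟩ <;> intro hE <;> exact hnB (Finset.mem_coe.2
          (hmemB a b hab (by tauto)))
      have hu : u ∈ D := by
        by_contra hu
        obtain ⟨x, hx, hxadj⟩ := hD u hu
        exact (hGB x u hxadj).2.2.2.1 rfl
      have hv : v ∈ D := by
        by_contra hv
        obtain ⟨x, hx, hxadj⟩ := hD v hv
        exact (hGB x v hxadj).2.2.2.2 rfl
      have hdom : G.IsDominatingSet (D.erase u) := by
        intro y hy
        by_cases hyu : y = u
        · subst hyu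
          exact ⟨v, Finset.mem_erase.2 ⟨huv.symm, hv⟩, hadj.symm⟩
        · have hyD : y ∉ D := fun hyD => hy (Finset.mem_erase.2 ⟨hyu, hyD⟩)
          obtain ⟨x, hx, hxadj⟩ := hD y hyD
          obtain ⟨hxy, hxu, -, -, -⟩ := hGB x y hxadj
          exact ⟨x, Finset.mem_erase.2 ⟨hxu, hx⟩, hxy⟩
      have h1 := domNumber_le G hdom
      have h2 := Finset.card_erase_lt_of_mem hu
      omega
    exact Nat.sInf_le ⟨B, hsub, hcard, hlt⟩
  · -- distance-two case
    obtain ⟨w, hw1, hw2⟩ := hrel.resolve_left hadj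
    have hwu : w ≠ u := hw1.ne'
    have hwv : w ≠ v := hw2.ne
    set B : Finset (Sym2 V) :=
      (G.incidenceFinset u ∪ G.incidenceFinset v).erase s(u, w) with hB
    have hmemB : ∀ a b : V, G.Adj a b → (a = u ∨ a = v ∨ b = u ∨ b = v) →
        s(a, b) ≠ s(u, w) → s(a, b) ∈ B := by
      intro a b hab hc hne
      refine Finset.mem_erase.2 ⟨hne, ?_⟩
      simp only [Finset.mem_union, SimpleGraph.mem_incidenceFinset,
        SimpleGraph.mk'_mem_incidenceSet_iff]
      obtain rfl | rfl | rfl | rfl := hc <;> simp [hab]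
    have hsub : (↑B : Set (Sym2 V)) ⊆ G.edgeSet := by
      intro e he
      rw [Finset.mem_coe, hB, Finset.mem_erase] at he
      rcases Finset.mem_union.1 he.2 with h' | h'
      · exact G.incidenceSet_subset u ((SimpleGraph.mem_incidenceFinset G u e).1 h')
      · exact G.incidenceSet_subset v ((SimpleGraph.mem_incidenceFinset G v e).1 h')
    have hcard : B.card = G.degree u + G.degree v - 1 := by
      have hic : G.incidenceFinset u ∩ G.incidenceFinset v = ∅ := by
        ext e
        simp only [Finset.mem_inter, SimpleGraph.mem_incidenceFinset, Finset.notMem_empty,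
          iff_false]
        rintro ⟨h1, h2⟩
        exact hadj (G.adj_of_mem_incidenceSet huv h1 h2)
      have hcui := Finset.card_union_add_card_inter (G.incidenceFinset u) (G.incidenceFinset v)
      rw [hic] at hcui
      simp only [Finset.card_empty, SimpleGraph.card_incidenceFinset_eq_degree] at hcui
      have hmem : s(u, w) ∈ G.incidenceFinset u ∪ G.incidenceFinset v :=
        Finset.mem_union_left _ ((SimpleGraph.mem_incidenceFinset G u _).2
          (G.mk'_mem_incidenceSet_left_iff.2 hw1))
      rw [hB, Finset.card_erase_of_mem hmem]
      omega
    have hlt : G.dominationNumber < (G.deleteEdges (↑B : Set (Sym2 V))).dominationNumber := by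
      obtain ⟨D, hD, hDcard⟩ := exists_minDom (G.deleteEdges (↑B : Set (Sym2 V)))
      have hGBv : ∀ x : V, ¬ (G.deleteEdges (↑B : Set (Sym2 V))).Adj x v := by
        intro x hx
        rw [SimpleGraph.deleteEdges_adj] at hx
        refine hx.2 (Finset.mem_coe.2 (hmemB x v hx.1 (by tauto) ?_))
        intro hE
        rcases Sym2.eq_iff.1 hE with ⟨h1', h2'⟩ | ⟨h1', h2'⟩
        · exact hwv h2'.symm
        · exact huv h2'.symm
      have hGBu : ∀ x : V, (G.deleteEdges (↑B : Set (Sym2 V))).Adj x u → x = w := by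
        intro x hx
        by_contra hxw
        rw [SimpleGraph.deleteEdges_adj] at hx
        refine hx.2 (Finset.mem_coe.2 (hmemB x u hx.1 (by tauto) ?_))
        intro hE
        rcases Sym2.eq_iff.1 hE with ⟨h1', h2'⟩ | ⟨h1', h2'⟩
        · exact hwu h2'.symm
        · exact hxw h1'
      have hv : v ∈ D := by
        by_contra hv
        obtain ⟨x, hx, hxadj⟩ := hD v hv
        exact hGBv x hxadj
      have huw : u ∈ D ∨ w ∈ D := by
        by_cases hu : u ∈ D
        · exact Or.inl hu
        · obtain ⟨x, hx, hxadj⟩ := hD u hu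
          exact Or.inr ((hGBu x hxadj) ▸ hx)
      have hdom : G.IsDominatingSet (insert w ((D.erase u).erase v)) := by
        intro y hy
        have hyw : y ≠ w := fun e => hy (by rw [e]; exact Finset.mem_insert_self w _)
        by_cases hyu : y = u
        · subst hyu
          exact ⟨w, Finset.mem_insert_self _ _, hw1.symm⟩
        by_cases hyv : y = v
        · subst hyv
          exact ⟨w, Finset.mem_insert_self _ _, hw2⟩
        have hyD : y ∉ D := fun hyD =>
          hy (Finset.mem_insert_of_mem (Finset.mem_erase.2 ⟨hyv, Finset.mem_erase.2 ⟨hyu, hyD⟩⟩))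
        obtain ⟨x, hx, hxadj⟩ := hD y hyD
        have hxv : x ≠ v := by
          intro e; subst e; exact hGBv y hxadj.symm
        have hxu : x ≠ u := by
          intro e; subst e; exact hyw (hGBu y hxadj.symm)
        refine ⟨x, Finset.mem_insert_of_mem
          (Finset.mem_erase.2 ⟨hxv, Finset.mem_erase.2 ⟨hxu, hx⟩⟩), ?_⟩
        exact (SimpleGraph.deleteEdges_adj.1 hxadj).1
      have hcard'' : (insert w ((D.erase u).erase v)).card < D.card := by
        by_cases hu : u ∈ D
        · have hvD' : v ∈ D.erase u := Finset.mem_erase.2 ⟨huv.symm, hv⟩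
          have c1 : ((D.erase u).erase v).card = D.card - 2 := by
            rw [Finset.card_erase_of_mem hvD', Finset.card_erase_of_mem hu]
            omega
          have c2 := Finset.card_insert_le w ((D.erase u).erase v)
          have hD2 : 2 ≤ D.card := Finset.one_lt_card.2 ⟨u, hu, v, hv, huv⟩
          omega
        · have hw : w ∈ D := huw.resolve_left hu
          have heq : insert w ((D.erase u).erase v) = (D.erase u).erase v :=
            Finset.insert_eq_self.2 (Finset.mem_erase.2 ⟨hwv, Finset.mem_erase.2 ⟨hwu, hw⟩⟩)
          rw [heq, Finset.erase_eq_of_notMem hu]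
          exact Finset.card_erase_lt_of_mem hv
      have h1 := domNumber_le G hdom
      omega
    exact Nat.sInf_le ⟨B, hsub, hcard, hlt⟩

/-- Counting lemma: there exist two distinct vertices at distance at most two whose
degree sum is at most `4m/n`. -/
lemma exists_pair (G : SimpleGraph V) [DecidableRel G.Adj]
    (hdeg : ∀ x : V, 1 ≤ G.degree x) (hn : 0 < Fintype.card V) :
    ∃ u v : V, u ≠ v ∧ (G.Adj u v ∨ ∃ w, G.Adj u w ∧ G.Adj w v) ∧
      ((G.degree u : ℝ) + (G.degree v : ℝ)) ≤
        4 * (G.edgeFinset.card : ℝ) / (Fintype.card V : ℝ) := by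
  by_contra hcon
  push_neg at hcon
  set n : ℝ := (Fintype.card V : ℝ) with hn'
  set s : ℝ := 4 * (G.edgeFinset.card : ℝ) / n with hs
  have hnpos : (0 : ℝ) < n := by rw [hn']; exact_mod_cast hn
  set L : Finset V := univ.filter (fun x => (G.degree x : ℝ) ≤ s / 2) with hL
  have hdisj : (↑L : Set V).PairwiseDisjoint (fun x => insert x (G.neighborFinset x)) := by
    intro a ha b hb hab
    simp only [Function.onFun]
    rw [Finset.disjoint_left]
    intro x hx hx'
    rw [Finset.mem_insert, SimpleGraph.mem_neighborFinset] at hx hx'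
    have hrel : G.Adj a b ∨ ∃ w, G.Adj a w ∧ G.Adj w b := by
      rcases hx with rfl | hax
      · rcases hx' with rfl | hbx
        · exact absurd rfl hab
        · exact Or.inl hbx.symm
      · rcases hx' with rfl | hbx
        · exact Or.inl hax
        · exact Or.inr ⟨x, hax, hbx.symm⟩
    have hla : (G.degree a : ℝ) ≤ s / 2 := (Finset.mem_filter.1 (Finset.mem_coe.1 ha)).2
    have hlb : (G.degree b : ℝ) ≤ s / 2 := (Finset.mem_filter.1 (Finset.mem_coe.1 hb)).2
    have := hcon a b hab hrel
    linarith
  have hdisj' : ∀ a ∈ L, ∀ b ∈ L, a ≠ b →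
      Disjoint (insert a (G.neighborFinset a)) (insert b (G.neighborFinset b)) :=
    fun a ha b hb hab => hdisj (Finset.mem_coe.2 ha) (Finset.mem_coe.2 hb) hab
  set T : Finset V := L.biUnion (fun x => insert x (G.neighborFinset x)) with hT
  have hTcard : T.card = ∑ x ∈ L, (G.degree x + 1) := by
    rw [hT, Finset.card_biUnion hdisj']
    refine Finset.sum_congr rfl fun x _ => ?_
    rw [Finset.card_insert_of_notMem (by simp), SimpleGraph.card_neighborFinset_eq_degree]
  have hblock : ∀ x ∈ L, ((G.degree x : ℝ) + 1) * (s / 2) <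
      ∑ y ∈ insert x (G.neighborFinset x), (G.degree y : ℝ) := by
    intro x hxL
    have hdx : (G.degree x : ℝ) ≤ s / 2 := (Finset.mem_filter.1 hxL).2
    have hdx1 : (1 : ℝ) ≤ (G.degree x : ℝ) := by exact_mod_cast hdeg x
    have hne : (G.neighborFinset x).Nonempty := by
      rw [← Finset.card_pos, SimpleGraph.card_neighborFinset_eq_degree]
      exact hdeg x
    have hsum : ∑ _y ∈ G.neighborFinset x, (s - (G.degree x : ℝ)) <
        ∑ y ∈ G.neighborFinset x, (G.degree y : ℝ) := by
      refine Finset.sum_lt_sum_of_nonempty hne fun y hy => ?_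
      rw [SimpleGraph.mem_neighborFinset] at hy
      have := hcon x y hy.ne (Or.inl hy)
      linarith
    rw [Finset.sum_const, nsmul_eq_mul, SimpleGraph.card_neighborFinset_eq_degree] at hsum
    rw [Finset.sum_insert (by simp)]
    nlinarith [mul_nonneg (sub_nonneg.2 hdx1)
      (by linarith : (0 : ℝ) ≤ s - 2 * (G.degree x : ℝ))]
  have hrest : ∀ y ∈ univ \ T, s / 2 < (G.degree y : ℝ) := by
    intro y hy
    rw [Finset.mem_sdiff] at hy
    by_contra hle
    push_neg at hle
    exact hy.2 (Finset.mem_biUnion.2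
      ⟨y, Finset.mem_filter.2 ⟨Finset.mem_univ y, hle⟩, Finset.mem_insert_self y _⟩)
  have hsplit : ∑ y ∈ univ \ T, (G.degree y : ℝ) + ∑ y ∈ T, (G.degree y : ℝ) =
      2 * (G.edgeFinset.card : ℝ) := by
    rw [Finset.sum_sdiff (Finset.subset_univ T), ← Nat.cast_sum,
      G.sum_degrees_eq_twice_card_edges]
    push_cast
    ring
  have hTsum : ∑ y ∈ T, (G.degree y : ℝ) =
      ∑ x ∈ L, ∑ y ∈ insert x (G.neighborFinset x), (G.degree y : ℝ) :=
    Finset.sum_biUnion hdisj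
  have hns : n * (s / 2) = 2 * (G.edgeFinset.card : ℝ) := by
    rw [hs]
    field_simp
    ring
  rcases L.eq_empty_or_nonempty with hLe | hLne
  · have hTe : T = ∅ := by rw [hT, hLe]; simp
    have hNV : Nonempty V := Fintype.card_pos_iff.1 hn
    have hlt : ∑ _y ∈ (univ : Finset V), (s / 2) < ∑ y ∈ (univ : Finset V), (G.degree y : ℝ) := by
      refine Finset.sum_lt_sum_of_nonempty Finset.univ_nonempty fun y _ => ?_
      exact hrest y (by rw [hTe, Finset.sdiff_empty]; exact Finset.mem_univ y)
    rw [Finset.sum_const, nsmul_eq_mul, Finset.card_univ] at hlt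
    have h2m : ∑ y ∈ (univ : Finset V), (G.degree y : ℝ) = 2 * (G.edgeFinset.card : ℝ) := by
      rw [← Nat.cast_sum, G.sum_degrees_eq_twice_card_edges]; push_cast; ring
    rw [h2m] at hlt
    rw [hn'] at hns
    linarith
  · have hTlt : (T.card : ℝ) * (s / 2) < ∑ y ∈ T, (G.degree y : ℝ) := by
      rw [hTsum]
      calc (T.card : ℝ) * (s / 2) = ∑ x ∈ L, ((G.degree x : ℝ) + 1) * (s / 2) := by
            rw [← Finset.sum_mul]
            congr 1
            rw [hTcard]
            push_cast
            ring
        _ < _ := Finset.sum_lt_sum_of_nonempty hLne hblock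
    have hRle : (((univ \ T : Finset V)).card : ℝ) * (s / 2) ≤
        ∑ y ∈ univ \ T, (G.degree y : ℝ) := by
      calc (((univ \ T : Finset V)).card : ℝ) * (s / 2)
          = ∑ _y ∈ univ \ T, (s / 2) := by rw [Finset.sum_const, nsmul_eq_mul]
        _ ≤ _ := Finset.sum_le_sum fun y hy => (hrest y hy).le
    have hcardsplit : ((univ \ T : Finset V)).card + T.card = Fintype.card V := by
      rw [Finset.card_sdiff_of_subset (Finset.subset_univ T), Finset.card_univ]
      have := Finset.card_le_card (Finset.subset_univ T)
      rw [Finset.card_univ] at this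
      omega
    have htot : n * (s / 2) < 2 * (G.edgeFinset.card : ℝ) := by
      have hadd := add_lt_add_of_le_of_lt hRle hTlt
      rw [hsplit] at hadd
      have : (((univ \ T : Finset V)).card : ℝ) + (T.card : ℝ) = n := by
        rw [hn']
        exact_mod_cast congrArg (Nat.cast : ℕ → ℝ) hcardsplit
      nlinarith
    linarith

end BondageAux

theorem stmt_17 {V : Type*} [Fintype V] [DecidableEq V] (G : SimpleGraph V)
    [DecidableRel G.Adj] (hconn : G.Connected) (htf : G.CliqueFree 3)
    (h : ℕ) (hh : 2 ≤ h)
    (hm : G.edgeFinset.card ≤ 2 * (Fintype.card V + 2 * h - 2))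
    (hn1 : 2 * (1 + Real.sqrt (2 * h)) ≤ (Fintype.card V : ℝ))
    (hn2 : Fintype.card V ≤ 16 * (h - 1)) :
    (G.bondageNumber : ℝ) ≤ 7 + 8 * ((h : ℝ) - 1) / (1 + Real.sqrt (2 * h)) := by
  set t : ℝ := Real.sqrt (2 * h) with ht
  have ht0 : (0 : ℝ) ≤ t := Real.sqrt_nonneg _
  have hn2' : (2 : ℝ) ≤ (Fintype.card V : ℝ) := by linarith
  have hn : 2 ≤ Fintype.card V := by exact_mod_cast hn2'
  have hdeg : ∀ x : V, 1 ≤ G.degree x := pos_degree G hconn hn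
  obtain ⟨u, v, huv, hrel, hsum⟩ := exists_pair G hdeg (by omega)
  have hb : G.bondageNumber ≤ G.degree u + G.degree v - 1 := bondage_le G huv hrel
  have hcast : (G.bondageNumber : ℝ) ≤ (G.degree u : ℝ) + (G.degree v : ℝ) - 1 := by
    have h1 : 1 ≤ G.degree u + G.degree v := by have := hdeg u; omega
    have heq : ((G.degree u + G.degree v - 1 : ℕ) : ℝ) =
        (G.degree u : ℝ) + (G.degree v : ℝ) - 1 := by
      rw [Nat.cast_sub h1]
      push_cast
      ring
    calc (G.bondageNumber : ℝ) ≤ ((G.degree u + G.degree v - 1 : ℕ) : ℝ) := by exact_mod_cast hb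
      _ = _ := heq
  have hnpos : (0 : ℝ) < (Fintype.card V : ℝ) := by linarith
  have hm' : (G.edgeFinset.card : ℝ) ≤ 2 * ((Fintype.card V : ℝ) + 2 * h - 2) := by
    have h2 : 2 ≤ Fintype.card V + 2 * h := by omega
    calc (G.edgeFinset.card : ℝ) ≤ ((2 * (Fintype.card V + 2 * h - 2) : ℕ) : ℝ) := by
          exact_mod_cast hm
      _ = 2 * ((Fintype.card V : ℝ) + 2 * h - 2) := by
          rw [Nat.cast_mul, Nat.cast_sub h2]
          push_cast
          ring
  have hh' : (2 : ℝ) ≤ (h : ℝ) := by exact_mod_cast hh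
  have h16 : (0 : ℝ) ≤ 16 * (h : ℝ) - 16 := by linarith
  have hden : (0 : ℝ) < 2 * (1 + t) := by linarith
  have e1 : 4 * (G.edgeFinset.card : ℝ) / (Fintype.card V : ℝ) ≤
      (8 * (Fintype.card V : ℝ) + 16 * h - 16) / (Fintype.card V : ℝ) :=
    (div_le_div_iff_of_pos_right hnpos).2 (by linarith)
  have e2 : (8 * (Fintype.card V : ℝ) + 16 * h - 16) / (Fintype.card V : ℝ) =
      8 + (16 * h - 16) / (Fintype.card V : ℝ) := by
    field_simp
    ring
  have e3 : (16 * (h : ℝ) - 16) / (Fintype.card V : ℝ) ≤ (16 * h - 16) / (2 * (1 + t)) :=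
    div_le_div_of_nonneg_left h16 hden hn1
  have e4 : (16 * (h : ℝ) - 16) / (2 * (1 + t)) = 8 * ((h : ℝ) - 1) / (1 + t) := by
    have : (1 + t) ≠ 0 := by linarith
    field_simp
    ring
  linarith [hsum, hcast]
end
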